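/- arXiv:2503.12283 — 2 statements merged into one kernel-verified Lean document; each statement's English description precedes it below -/
import Mathlib

section
/- The map (π, ξ0) ↦ f_π(ξ0) is jointly continuous on Π0 × Ξ0. -/
open Filter Topology MeasureTheory
open scoped Classical

namespace OfflineRL

variable (S A : Type*) [Fintype S] [Fintype A] [DecidableEq S] [DecidableEq A]

/-- Stationary policies `Π`. -/
def policySet : Set (S → A → ℝ) :=
  {π | ∀ s, (∀ a, 0 ≤ π s a) ∧ ∑ a, π s a = 1}

/-- Exploratory (everywhere positive) policies `Π₀`. -/
def policyPos : Set (S → A → ℝ) :=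
  {π | π ∈ policySet S A ∧ ∀ s a, 0 < π s a}

/-- Policies `Π_ε`. -/
def policyEps (ε : ℝ) : Set (S → A → ℝ) :=
  {π | π ∈ policySet S A ∧ ∀ s a, ε ≤ π s a}

/-- Transition kernels `𝒬`. -/
def kernelSet : Set (S → A → S → ℝ) :=
  {Q | ∀ s a, (∀ s', 0 ≤ Q s a s') ∧ ∑ s', Q s a s' = 1}

/-- Kernels whose associated directed graph on `S × A` is strongly connected, `𝒬₀`. -/
def kernel0 : Set (S → A → S → ℝ) :=
  {Q | Q ∈ kernelSet S A ∧
    ∀ x y : S × A, Relation.ReflTransGen (fun u v : S × A => 0 < Q u.1 u.2 v.1) x y}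

/-- Probability simplex over the states. -/
def stateSimplex : Set (S → ℝ) := {p | (∀ s, 0 ≤ p s) ∧ ∑ s, p s = 1}

/-- `Ξ`: state-action-next-state distributions with balanced marginals. -/
def XiSet : Set (S × A × S → ℝ) :=
  {ξ | (∀ z, 0 ≤ ξ z) ∧ (∑ z, ξ z = 1) ∧
    ∀ s : S, (∑ s' : S, ∑ a : A, ξ (s, a, s')) = ∑ s' : S, ∑ a : A, ξ (s', a, s)}

/-- `Ξ₀`: elements of `Ξ` with strongly connected support graph. -/
def Xi0Set : Set (S × A × S → ℝ) :=
  {ξ | ξ ∈ XiSet S A ∧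
    ∀ x y : S × A, Relation.ReflTransGen (fun u v : S × A => 0 < ξ (u.1, u.2, v.1)) x y}

/-- Stationary state-action distribution `μ(s,a) = Σ_{s'} ξ(s,a,s')`. -/
noncomputable def muXi (ξ : S × A × S → ℝ) (x : S × A) : ℝ := ∑ s', ξ (x.1, x.2, s')

/-- Transition kernel `Q(s'|s,a)` determined by `ξ`. -/
noncomputable def QXi (ξ : S × A × S → ℝ) (s : S) (a : A) (s' : S) : ℝ :=
  ξ (s, a, s') / muXi S A ξ (s, a)

/-- Behavioral policy `π(a'|s')` determined by `ξ`. -/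
noncomputable def piXi (ξ : S × A × S → ℝ) (s' : S) (a' : A) : ℝ :=
  muXi S A ξ (s', a') / ∑ a, muXi S A ξ (s', a)

/-- Transition matrix of the state-action chain of `ξ`. -/
noncomputable def Pmat (ξ : S × A × S → ℝ) (x x' : S × A) : ℝ :=
  piXi S A ξ x'.1 x'.2 * QXi S A ξ x.1 x.2 x'.1

/-- Probability of a finite state-action trajectory under `ℙ_ξ` with initial distribution `η`. -/
noncomputable def trajP (ξ : S × A × S → ℝ) (η : S → ℝ) (T : ℕ) (xs : Fin T → S × A) : ℝ :=
  ∏ t : Fin T,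
    if (t : ℕ) = 0 then η (xs t).1 * piXi S A ξ (xs t).1 (xs t).2
    else Pmat S A ξ (xs ⟨(t : ℕ) - 1, Nat.lt_of_le_of_lt (Nat.sub_le _ _) t.isLt⟩) (xs t)

/-- Empirical state-action-next-state distribution (with the ghost transition from
`(S_T, A_T)` to `S_1`, which makes it cyclic). -/
noncomputable def empXi (T : ℕ) (xs : Fin T → S × A) : S × A × S → ℝ := fun z =>
  ((Finset.univ.filter fun t : Fin T =>
      xs t = (z.1, z.2.1) ∧
      (xs ⟨((t : ℕ) + 1) % T,
        Nat.mod_lt _ (Nat.lt_of_le_of_lt (Nat.zero_le _) t.isLt)⟩).1 = z.2.2).card : ℝ) / T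

/-- `ℙ_ξ(ξ̂_T ∈ 𝒟)`. -/
noncomputable def probXi (ξ : S × A × S → ℝ) (η : S → ℝ) (𝒟 : Set (S × A × S → ℝ))
    (T : ℕ) : ℝ :=
  ∑ xs : Fin T → S × A, 𝒟.indicator (fun _ => trajP S A ξ η T xs) (empXi S A T xs)

/-- Extended-real logarithm: `elog x = log x` for `x > 0` and `⊥` otherwise. -/
noncomputable def elog (x : ℝ) : EReal := if x ≤ 0 then ⊥ else ((Real.log x : ℝ) : EReal)

/-- Marginal state distribution `μ_S(s)`. -/
noncomputable def rowXi (ξ : S × A × S → ℝ) (s : S) : ℝ := ∑ a, ∑ s', ξ (s, a, s')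

/-- Conditional relative entropy for MDPs, with the conventions `0·log(0/t) = 0` and
`t·log(t/0) = ∞` for `t > 0`. -/
noncomputable def Dmdp (ξ' ξ : S × A × S → ℝ) : EReal :=
  ∑ z : S × A × S,
    if ξ' z = 0 then (0 : EReal)
    else if ξ z = 0 then (⊤ : EReal)
    else (((ξ' z * (Real.log (ξ' z / rowXi S A ξ' z.1) -
      Real.log (ξ z / rowXi S A ξ z.1))) : ℝ) : EReal)

/-- Long-run average reward. -/
def V (r : S → A → ℝ) (ξ : S × A × S → ℝ) : ℝ := ∑ z : S × A × S, r z.1 z.2.1 * ξ z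

/-- `ξ` is the stationary state-action-next-state distribution induced by the pair
`(π, Q)` where `Q` is the kernel determined by `ξ0`. -/
def IsShift (π : S → A → ℝ) (ξ0 ξ : S × A × S → ℝ) : Prop :=
  ∃ μ : S × A → ℝ, (∀ x, 0 ≤ μ x) ∧ (∑ x, μ x = 1) ∧
    (∀ x' : S × A, μ x' = ∑ x : S × A, μ x * (π x'.1 x'.2 * QXi S A ξ0 x.1 x.2 x'.1)) ∧
    (∀ s a s', ξ (s, a, s') = QXi S A ξ0 s a s' * μ (s, a))

/-- The distributionally robust value function `V^π_ρ(ξ')`, where `f = f_π` is the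
distribution shift function of the evaluation policy. -/
noncomputable def Vrho (r : S → A → ℝ) (f : (S × A × S → ℝ) → (S × A × S → ℝ)) (ρ : ℝ)
    (ξ' : S × A × S → ℝ) : ℝ :=
  sInf ((fun ξ0 => V S A r (f ξ0)) '' {ξ0 | ξ0 ∈ Xi0Set S A ∧ Dmdp S A ξ' ξ0 ≤ (ρ : EReal)})



/-! ### Auxiliary lemmas -/

/-- On `Ξ₀`, every state-action marginal is positive. -/
lemma muXi_pos {ξ : S × A × S → ℝ} (hξ : ξ ∈ Xi0Set S A) (x : S × A) :
    0 < muXi S A ξ x := by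
  obtain ⟨⟨hnn, hsum, _⟩, hconn⟩ := hξ
  have hex : ∃ z : S × A × S, 0 < ξ z := by
    by_contra h
    push_neg at h
    have : ∑ z, ξ z = 0 :=
      Finset.sum_eq_zero fun z _ => le_antisymm (h z) (hnn z)
    rw [hsum] at this; exact one_ne_zero this
  obtain ⟨z, hz⟩ := hex
  have hout : ∀ y : S × A, 0 < ξ (y.1, y.2, z.1) → 0 < muXi S A ξ y := by
    intro y hy
    have h1 : ξ (y.1, y.2, z.1) ≤ ∑ s', ξ (y.1, y.2, s') :=
      Finset.single_le_sum (f := fun s' => ξ (y.1, y.2, s'))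
        (fun s' _ => hnn _) (Finset.mem_univ z.1)
    exact lt_of_lt_of_le hy h1
  -- the node (z.1, z.2.1) has a positive outgoing edge
  have hz0 : 0 < muXi S A ξ (z.1, z.2.1) := by
    have h1 : ξ (z.1, z.2.1, z.2.2) ≤ ∑ s', ξ (z.1, z.2.1, s') :=
      Finset.single_le_sum (f := fun s' => ξ (z.1, z.2.1, s'))
        (fun s' _ => hnn _) (Finset.mem_univ z.2.2)
    have hz' : 0 < ξ (z.1, z.2.1, z.2.2) := by simpa using hz
    exact lt_of_lt_of_le hz' h1
  rcases (hconn x (z.1, z.2.1)).cases_head with h | ⟨y, hxy, _⟩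
  · rw [h]; exact hz0
  · have h1 : ξ (x.1, x.2, y.1) ≤ ∑ s', ξ (x.1, x.2, s') :=
      Finset.single_le_sum (f := fun s' => ξ (x.1, x.2, s'))
        (fun s' _ => hnn _) (Finset.mem_univ y.1)
    exact lt_of_lt_of_le hxy h1

lemma QXi_nonneg {ξ : S × A × S → ℝ} (hξ : ξ ∈ Xi0Set S A) (s : S) (a : A) (s' : S) :
    0 ≤ QXi S A ξ s a s' :=
  div_nonneg (hξ.1.1 _) (muXi_pos S A hξ (s, a)).le

lemma QXi_sum {ξ : S × A × S → ℝ} (hξ : ξ ∈ Xi0Set S A) (s : S) (a : A) :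
    ∑ s', QXi S A ξ s a s' = 1 := by
  have hm : muXi S A ξ (s, a) ≠ 0 := (muXi_pos S A hξ (s, a)).ne'
  unfold QXi
  rw [← Finset.sum_div]
  rw [show (∑ s', ξ (s, a, s')) = muXi S A ξ (s, a) from rfl]
  exact div_self hm

/-- Zero propagates backwards along positive edges for a nonnegative stationary vector. -/
private lemma zero_prop {X : Type*} [Fintype X] (P : X → X → ℝ)
    (w : X → ℝ) (hw0 : ∀ x, 0 ≤ w x) (hP0 : ∀ u v, 0 ≤ P u v)
    (hw : ∀ x', w x' = ∑ x, w x * P x x') {x₀ y : X}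
    (h : Relation.ReflTransGen (fun a b => 0 < P a b) y x₀) (h0 : w x₀ = 0) : w y = 0 := by
  induction h using Relation.ReflTransGen.head_induction_on with
  | refl => exact h0
  | head hac hcb ih =>
    rename_i a c
    have hsum : ∑ x, w x * P x c = 0 := by rw [← hw c]; exact ih
    have hterm : w a * P a c = 0 := by
      have := (Finset.sum_eq_zero_iff_of_nonneg
        (fun x _ => mul_nonneg (hw0 x) (hP0 x c))).mp hsum a (Finset.mem_univ a)
      exact this
    rcases mul_eq_zero.mp hterm with h | h
    · exact h
    · exact absurd h hac.ne'

/-- Positivity propagates forwards along positive edges for a nonnegative stationary vector. -/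
private lemma pos_prop {X : Type*} [Fintype X] (P : X → X → ℝ)
    (μ : X → ℝ) (hμ0 : ∀ x, 0 ≤ μ x) (hP0 : ∀ u v, 0 ≤ P u v)
    (hμ : ∀ x', μ x' = ∑ x, μ x * P x x') {x₀ z : X}
    (h : Relation.ReflTransGen (fun a b => 0 < P a b) x₀ z) (h0 : 0 < μ x₀) : 0 < μ z := by
  induction h with
  | refl => exact h0
  | tail hab hbc ih =>
    rename_i b c
    have h1 : μ b * P b c ≤ ∑ x, μ x * P x c :=
      Finset.single_le_sum (fun x _ => mul_nonneg (hμ0 x) (hP0 x c)) (Finset.mem_univ b)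
    have h2 : 0 < μ b * P b c := mul_pos ih hbc
    rw [hμ c]
    exact lt_of_lt_of_le h2 h1

/-- Uniqueness of the stationary probability vector of an irreducible nonnegative matrix. -/
private lemma stationary_unique {X : Type*} [Fintype X] (P : X → X → ℝ)
    (hP0 : ∀ u v, 0 ≤ P u v)
    (hconn : ∀ u v, Relation.ReflTransGen (fun a b => 0 < P a b) u v)
    {μ ν : X → ℝ} (hμ0 : ∀ x, 0 ≤ μ x) (hμ1 : ∑ x, μ x = 1)
    (hμ : ∀ x', μ x' = ∑ x, μ x * P x x')
    (hν0 : ∀ x, 0 ≤ ν x) (hν1 : ∑ x, ν x = 1)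
    (hν : ∀ x', ν x' = ∑ x, ν x * P x x') : μ = ν := by
  have hne : (Finset.univ : Finset X).Nonempty := by
    rcases (Finset.univ : Finset X).eq_empty_or_nonempty with h | h
    · exfalso; rw [h, Finset.sum_empty] at hμ1; exact one_ne_zero hμ1.symm
    · exact h
  have hνpos : ∀ x, 0 < ν x := by
    have hex : ∃ x0, 0 < ν x0 := by
      by_contra h
      push_neg at h
      have : ∑ x, ν x = 0 :=
        Finset.sum_eq_zero fun x _ => le_antisymm (h x) (hν0 x)
      rw [hν1] at this; exact one_ne_zero this
    obtain ⟨x0, hx0⟩ := hex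
    intro z
    exact pos_prop P ν hν0 hP0 hν (hconn x0 z) hx0
  obtain ⟨x₀, -, hx₀min⟩ :=
    Finset.exists_min_image Finset.univ (fun x => μ x / ν x) hne
  set c : ℝ := μ x₀ / ν x₀ with hc
  set w : X → ℝ := fun x => μ x - c * ν x with hwdef
  have hw0 : ∀ x, 0 ≤ w x := by
    intro x
    have h1 : c ≤ μ x / ν x := hx₀min x (Finset.mem_univ x)
    have h2 : c * ν x ≤ μ x := by
      rw [← div_mul_cancel₀ (μ x) (hνpos x).ne']
      exact mul_le_mul_of_nonneg_right h1 (hνpos x).le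
    simp only [hwdef]
    linarith
  have hwst : ∀ x', w x' = ∑ x, w x * P x x' := by
    intro x'
    have h1 : ∑ x, w x * P x x'
        = ∑ x, (μ x * P x x' - c * (ν x * P x x')) := by
      apply Finset.sum_congr rfl
      intro x _
      simp only [hwdef]
      ring
    rw [h1, Finset.sum_sub_distrib, ← Finset.mul_sum, ← hμ x', ← hν x']
  have hwx₀ : w x₀ = 0 := by
    simp only [hwdef, hc]
    rw [div_mul_cancel₀ (μ x₀) (hνpos x₀).ne']
    ring
  have hwz : ∀ y, w y = 0 := fun y =>
    zero_prop P w hw0 hP0 hwst (hconn y x₀) hwx₀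
  have hsumw : ∑ x, w x = 1 - c := by
    simp only [hwdef]
    rw [Finset.sum_sub_distrib, ← Finset.mul_sum, hμ1, hν1, mul_one]
  have hc1 : c = 1 := by
    have h0 : ∑ x, w x = 0 := Finset.sum_eq_zero fun x _ => hwz x
    rw [hsumw] at h0; linarith
  funext x
  have := hwz x
  simp only [hwdef, hc1, one_mul] at this
  linarith

/-- Any `IsShift` witness equals `muXi` of the shifted distribution. -/
lemma isShift_mu {ξ0 ξ : S × A × S → ℝ} {μ : S × A → ℝ} (hξ0 : ξ0 ∈ Xi0Set S A)
    (hμQ : ∀ s a s', ξ (s, a, s') = QXi S A ξ0 s a s' * μ (s, a)) (x : S × A) :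
    muXi S A ξ x = μ x := by
  have h1 : muXi S A ξ x = ∑ s', QXi S A ξ0 x.1 x.2 s' * μ (x.1, x.2) := by
    unfold muXi
    exact Finset.sum_congr rfl fun s' _ => hμQ x.1 x.2 s'
  rw [h1, ← Finset.sum_mul, QXi_sum S A hξ0, one_mul]

/-- Uniqueness of the distribution shift. -/
lemma shift_unique {π : S → A → ℝ} {ξ0 : S × A × S → ℝ}
    (hπ : π ∈ policyPos S A) (hξ0 : ξ0 ∈ Xi0Set S A)
    {ξ ξ' : S × A × S → ℝ} (h1 : IsShift S A π ξ0 ξ) (h2 : IsShift S A π ξ0 ξ') :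
    ξ = ξ' := by
  obtain ⟨μ, hμ0, hμ1, hμst, hμQ⟩ := h1
  obtain ⟨ν, hν0, hν1, hνst, hνQ⟩ := h2
  set P : S × A → S × A → ℝ :=
    fun x x' => π x'.1 x'.2 * QXi S A ξ0 x.1 x.2 x'.1 with hP
  have hP0 : ∀ u v, 0 ≤ P u v := fun u v =>
    mul_nonneg ((hπ.1 v.1).1 v.2) (QXi_nonneg S A hξ0 _ _ _)
  have hconn : ∀ u v, Relation.ReflTransGen (fun a b => 0 < P a b) u v := by
    intro u v
    refine Relation.ReflTransGen.mono ?_ u v (hξ0.2 u v)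
    intro a b hab
    exact mul_pos (hπ.2 b.1 b.2)
      (div_pos hab (muXi_pos S A hξ0 (a.1, a.2)))
  have hμν : μ = ν := by
    refine stationary_unique P hP0 hconn hμ0 hμ1 ?_ hν0 hν1 ?_
    · intro x'; rw [hμst x']
    · intro x'; rw [hνst x']
  funext z
  obtain ⟨s, a, s'⟩ := z
  rw [hμQ s a s', hνQ s a s', hμν]

lemma xiSet_isClosed : IsClosed (XiSet S A) := by
  have heq : XiSet S A =
      (⋂ z : S × A × S, {ξ : S × A × S → ℝ | 0 ≤ ξ z}) ∩
      ({ξ : S × A × S → ℝ | ∑ z, ξ z = 1} ∩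
       ⋂ s : S, {ξ : S × A × S → ℝ |
         (∑ s' : S, ∑ a : A, ξ (s, a, s')) = ∑ s' : S, ∑ a : A, ξ (s', a, s)}) := by
    ext ξ
    simp only [XiSet, Set.mem_setOf_eq, Set.mem_inter_iff, Set.mem_iInter]
    try tauto
  rw [heq]
  refine IsClosed.inter ?_ (IsClosed.inter ?_ ?_)
  · exact isClosed_iInter fun z => isClosed_le continuous_const (continuous_apply z)
  · exact isClosed_eq (continuous_finset_sum _ fun z _ => continuous_apply z)
      continuous_const
  · refine isClosed_iInter fun s => isClosed_eq ?_ ?_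
    · exact continuous_finset_sum _ fun s' _ =>
        continuous_finset_sum _ fun a _ => continuous_apply (s, a, s')
    · exact continuous_finset_sum _ fun s' _ =>
        continuous_finset_sum _ fun a _ => continuous_apply (s', a, s)

lemma xiSet_isCompact : IsCompact (XiSet S A) := by
  have hsub : XiSet S A ⊆ Set.pi Set.univ (fun _ : S × A × S => Set.Icc (0 : ℝ) 1) := by
    intro ξ hξ z _
    refine ⟨hξ.1 z, ?_⟩
    calc ξ z ≤ ∑ w, ξ w :=
          Finset.single_le_sum (fun w _ => hξ.1 w) (Finset.mem_univ z)
      _ = 1 := hξ.2.1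
  exact (isCompact_univ_pi fun _ => isCompact_Icc).of_isClosed_subset
    (xiSet_isClosed S A) hsub

lemma sum_muXi (ξ : S × A × S → ℝ) :
    ∑ x : S × A, muXi S A ξ x = ∑ z : S × A × S, ξ z := by
  simp [muXi, Fintype.sum_prod_type]

/-- Limits of shifted distributions are shifted distributions. -/
lemma shift_limit {π : S → A → ℝ} {ξ0 ξst : S × A × S → ℝ}
    (hπ : π ∈ policyPos S A) (hξ0 : ξ0 ∈ Xi0Set S A)
    (πs : ℕ → S → A → ℝ) (ξ0s ξs : ℕ → S × A × S → ℝ)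
    (hmem : ∀ n, ξ0s n ∈ Xi0Set S A ∧ ξs n ∈ XiSet S A ∧ IsShift S A (πs n) (ξ0s n) (ξs n))
    (hπt : Tendsto πs atTop (𝓝 π)) (hξ0t : Tendsto ξ0s atTop (𝓝 ξ0))
    (hξt : Tendsto ξs atTop (𝓝 ξst)) : IsShift S A π ξ0 ξst := by
  -- coordinatewise convergence
  have hπc : ∀ s a, Tendsto (fun n => πs n s a) atTop (𝓝 (π s a)) := by
    intro s a
    have h1 := (tendsto_pi_nhds.mp hπt) s
    exact (tendsto_pi_nhds.mp h1) a
  have hξ0c : ∀ z, Tendsto (fun n => ξ0s n z) atTop (𝓝 (ξ0 z)) :=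
    fun z => (tendsto_pi_nhds.mp hξ0t) z
  have hξc : ∀ z, Tendsto (fun n => ξs n z) atTop (𝓝 (ξst z)) :=
    fun z => (tendsto_pi_nhds.mp hξt) z
  have hmu0t : ∀ x : S × A,
      Tendsto (fun n => muXi S A (ξ0s n) x) atTop (𝓝 (muXi S A ξ0 x)) := by
    intro x
    exact tendsto_finset_sum _ fun s' _ => hξ0c (x.1, x.2, s')
  have hQt : ∀ s a s', Tendsto (fun n => QXi S A (ξ0s n) s a s') atTop
      (𝓝 (QXi S A ξ0 s a s')) := by
    intro s a s'
    exact (hξ0c (s, a, s')).div (hmu0t (s, a)) (muXi_pos S A hξ0 (s, a)).ne'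
  have hμnt : ∀ x : S × A,
      Tendsto (fun n => muXi S A (ξs n) x) atTop (𝓝 (muXi S A ξst x)) := by
    intro x
    exact tendsto_finset_sum _ fun s' _ => hξc (x.1, x.2, s')
  -- the canonical witnesses along the sequence
  have key : ∀ n, (∀ x' : S × A, muXi S A (ξs n) x' =
        ∑ x : S × A, muXi S A (ξs n) x *
          (πs n x'.1 x'.2 * QXi S A (ξ0s n) x.1 x.2 x'.1)) ∧
      (∀ s a s', ξs n (s, a, s') = QXi S A (ξ0s n) s a s' * muXi S A (ξs n) (s, a)) := by
    intro n
    obtain ⟨μ, hμ0, hμ1, hμst, hμQ⟩ := (hmem n).2.2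
    have he : ∀ x, muXi S A (ξs n) x = μ x := isShift_mu S A (hmem n).1 hμQ
    constructor
    · intro x'
      simp only [he]
      exact hμst x'
    · intro s a s'
      simp only [he]
      exact hμQ s a s'
  -- the limit is in XiSet
  have hst_mem : ξst ∈ XiSet S A :=
    (xiSet_isClosed S A).mem_of_tendsto hξt
      (Filter.Eventually.of_forall fun n => (hmem n).2.1)
  refine ⟨muXi S A ξst, ?_, ?_, ?_, ?_⟩
  · intro x
    exact Finset.sum_nonneg fun s' _ => hst_mem.1 _
  · rw [sum_muXi]; exact hst_mem.2.1
  · intro x'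
    have hL : Tendsto (fun n => muXi S A (ξs n) x') atTop (𝓝 (muXi S A ξst x')) :=
      hμnt x'
    have hR : Tendsto (fun n => ∑ x : S × A, muXi S A (ξs n) x *
        (πs n x'.1 x'.2 * QXi S A (ξ0s n) x.1 x.2 x'.1)) atTop
        (𝓝 (∑ x : S × A, muXi S A ξst x *
          (π x'.1 x'.2 * QXi S A ξ0 x.1 x.2 x'.1))) :=
      tendsto_finset_sum _ fun x _ =>
        (hμnt x).mul ((hπc x'.1 x'.2).mul (hQt x.1 x.2 x'.1))
    have hR' : Tendsto (fun n => muXi S A (ξs n) x') atTop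
        (𝓝 (∑ x : S × A, muXi S A ξst x *
          (π x'.1 x'.2 * QXi S A ξ0 x.1 x.2 x'.1))) :=
      hR.congr fun n => ((key n).1 x').symm
    exact tendsto_nhds_unique hL hR'
  · intro s a s'
    have hL : Tendsto (fun n => ξs n (s, a, s')) atTop (𝓝 (ξst (s, a, s'))) :=
      hξc (s, a, s')
    have hR : Tendsto (fun n => QXi S A (ξ0s n) s a s' * muXi S A (ξs n) (s, a))
        atTop (𝓝 (QXi S A ξ0 s a s' * muXi S A ξst (s, a))) :=
      (hQt s a s').mul (hμnt (s, a))
    have hR' : Tendsto (fun n => ξs n (s, a, s')) atTop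
        (𝓝 (QXi S A ξ0 s a s' * muXi S A ξst (s, a))) :=
      hR.congr fun n => ((key n).2 s a s').symm
    exact tendsto_nhds_unique hL hR'

/-- **Joint continuity of `(π, ξ0) ↦ f_π(ξ0)`** (Corollary 3).
Any function `f` that maps each `(π, ξ0) ∈ Π₀ × Ξ₀` to the stationary
state-action-next-state distribution of the Markov chain induced by `(π, Q(ξ0))`
is jointly continuous on `Π₀ × Ξ₀`. -/
theorem distribution_shift_jointly_continuous
    (f : (S → A → ℝ) → (S × A × S → ℝ) → (S × A × S → ℝ))
    (hf : ∀ π ∈ policyPos S A, ∀ ξ0 ∈ Xi0Set S A,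
      f π ξ0 ∈ Xi0Set S A ∧ IsShift S A π ξ0 (f π ξ0)) :
    ContinuousOn (fun q : (S → A → ℝ) × (S × A × S → ℝ) => f q.1 q.2)
      (policyPos S A ×ˢ Xi0Set S A) := by
  intro q hq
  refine tendsto_of_subseq_tendsto fun ns hns => ?_
  have hmem : ∀ᶠ n in atTop, ns n ∈ policyPos S A ×ˢ Xi0Set S A :=
    hns.eventually eventually_mem_nhdsWithin
  rw [eventually_atTop] at hmem
  obtain ⟨N, hN⟩ := hmem
  set v : ℕ → (S → A → ℝ) × (S × A × S → ℝ) := fun n => ns (n + N) with hv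
  have hvD : ∀ n, (v n).1 ∈ policyPos S A ∧ (v n).2 ∈ Xi0Set S A := by
    intro n
    have := hN (n + N) (Nat.le_add_left N n)
    exact ⟨this.1, this.2⟩
  have hvq : Tendsto v atTop (𝓝 q) :=
    (hns.mono_right nhdsWithin_le_nhds).comp (tendsto_add_atTop_nat N)
  have hπt : Tendsto (fun n => (v n).1) atTop (𝓝 q.1) :=
    (continuous_fst.tendsto q).comp hvq
  have hξ0t : Tendsto (fun n => (v n).2) atTop (𝓝 q.2) :=
    (continuous_snd.tendsto q).comp hvq
  have hfx : ∀ n, f (v n).1 (v n).2 ∈ XiSet S A := fun n =>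
    ((hf _ (hvD n).1 _ (hvD n).2).1).1
  obtain ⟨ξst, hξstmem, φ, hφ, hφt⟩ :=
    (xiSet_isCompact S A).tendsto_subseq hfx
  refine ⟨fun n => φ n + N, ?_⟩
  have hkey : ξst = f q.1 q.2 := by
    refine shift_unique S A hq.1 hq.2 ?_ ((hf q.1 hq.1 q.2 hq.2).2)
    refine shift_limit S A hq.1 hq.2
      (fun n => (v (φ n)).1) (fun n => (v (φ n)).2)
      (fun n => f (v (φ n)).1 (v (φ n)).2) ?_ ?_ ?_ ?_
    · intro n
      exact ⟨(hvD (φ n)).2, hfx (φ n), (hf _ (hvD (φ n)).1 _ (hvD (φ n)).2).2⟩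
    · exact hπt.comp hφ.tendsto_atTop
    · exact hξ0t.comp hφ.tendsto_atTop
    · exact hφt
  show Tendsto ((fun n => f (v n).1 (v n).2) ∘ φ) atTop (𝓝 (f q.1 q.2))
  rw [← hkey]
  exact hφt

end OfflineRL
end

section
/- For any fixed π ∈ Π0, ρ ≥ 0, and ξ' ∈ Ξ0, the distributionally robust value function admits the reformulation V^π_ρ(ξ') = min over Q ∈ 𝒬0 satisfying Σ_{x∈𝒮×𝒜} μ'(x)·D(Q'(·|x)‖Q(·|x)) ≤ ρ of Σ_{x∈𝒮×𝒜} r(x)·μ_{π,Q}(x), where Q' is the transition kernel induced by ξ', μ' is the stationary state-action distribution of ξ' (μ'(s,a) = Σ_{s'} ξ'(s,a,s')), D denotes the relative entropy on Δ(𝒮), and μ_{π,Q} is the unique positive solution of Σ_x μ_{π,Q}(x) = 1 and μ_{π,Q}(x) = Σ_y μ_{π,Q}(y)·P(y,x) with P((s,a),(s',a')) = π(a'|s')Q(s'|s,a); moreover this minimum is attained. -/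
open Filter Topology MeasureTheory
open scoped Classical

namespace OfflineRL

variable (S A : Type*) [Fintype S] [Fintype A] [DecidableEq S] [DecidableEq A]

/-- Relative entropy `D(p‖q)` on `Δ(S)`, with the conventions `0·log(0/t) = 0` and
`t·log(t/0) = ∞` for `t > 0`. -/
noncomputable def KLS (p q : S → ℝ) : EReal :=
  ∑ s' : S,
    if p s' = 0 then (0 : EReal)
    else if q s' = 0 then (⊤ : EReal)
    else (((p s' * Real.log (p s' / q s')) : ℝ) : EReal)

/-- `μ` is the unique positive solution of `Σ_x μ(x) = 1` and
`μ(x) = Σ_y μ(y) P(y,x)` with `P((s,a),(s',a')) = π(a'|s')·Q(s'|s,a)`. -/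
def IsStatDist (π : S → A → ℝ) (Q : S → A → S → ℝ) (μ : S × A → ℝ) : Prop :=
  (∀ x, 0 < μ x) ∧ (∑ x, μ x = 1) ∧
    ∀ x' : S × A, μ x' = ∑ x : S × A, μ x * (π x'.1 x'.2 * Q x.1 x.2 x'.1)

/-- The weighted conditional relative entropy constraint defining `𝒬_ρ(ξ')`:
`Σ_x μ'(x) D(Q'(·|x) ‖ Q(·|x)) ≤ ρ`, where `Q'` is the kernel induced by `ξ'` and
`μ'` its stationary state-action distribution. -/
noncomputable def InUncertaintySet (ξ' : S × A × S → ℝ) (ρ : ℝ)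
    (Q : S → A → S → ℝ) : Prop :=
  (∑ x : S × A, ((muXi S A ξ' x : ℝ) : EReal) *
      KLS S (fun s' => QXi S A ξ' x.1 x.2 s') (fun s' => Q x.1 x.2 s')) ≤ (ρ : EReal)



/-! ### Generic auxiliary lemmas -/

lemma aux_coe_sum {ι : Type*} (s : Finset ι) (f : ι → ℝ) :
    ((∑ i ∈ s, f i : ℝ) : EReal) = ∑ i ∈ s, ((f i : ℝ) : EReal) := by
  induction s using Finset.cons_induction with
  | empty => simp
  | cons a s ha ih => rw [Finset.sum_cons, Finset.sum_cons, EReal.coe_add, ih]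

lemma aux_sum_ne_bot {ι : Type*} (s : Finset ι) (f : ι → EReal)
    (h : ∀ i ∈ s, f i ≠ ⊥) : ∑ i ∈ s, f i ≠ ⊥ := by
  induction s using Finset.cons_induction with
  | empty => simp
  | cons a s ha ih =>
    rw [Finset.sum_cons]
    intro hc
    rcases EReal.add_eq_bot_iff.1 hc with h1 | h2
    · exact h a (Finset.mem_cons_self a s) h1
    · exact ih (fun i hi => h i (Finset.mem_cons_of_mem hi)) h2

lemma aux_sum_eq_top {ι : Type*} (s : Finset ι) (f : ι → EReal)
    (h : ∀ i ∈ s, f i ≠ ⊥) {i₀ : ι} (hi₀ : i₀ ∈ s) (htop : f i₀ = ⊤) :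
    ∑ i ∈ s, f i = ⊤ := by
  rw [← Finset.add_sum_erase _ _ hi₀, htop]
  exact EReal.top_add_of_ne_bot
    (aux_sum_ne_bot _ _ fun i hi => h i (Finset.mem_of_mem_erase hi))

/-- Gibbs' inequality, real version with `ite` convention. -/
lemma aux_gibbs {ι : Type*} [Fintype ι] (p q : ι → ℝ)
    (hp : ∀ i, 0 ≤ p i) (hq : ∀ i, 0 ≤ q i)
    (hpq : ∀ i, 0 < p i → 0 < q i) (hs : ∑ i, q i ≤ ∑ i, p i) :
    0 ≤ ∑ i, (if p i = 0 then (0 : ℝ) else p i * Real.log (p i / q i)) := by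
  have key : ∀ i, p i - q i ≤ (if p i = 0 then (0 : ℝ) else p i * Real.log (p i / q i)) := by
    intro i
    by_cases hpi : p i = 0
    · simp [hpi]; linarith [hq i]
    · have hpi' : 0 < p i := lt_of_le_of_ne (hp i) (Ne.symm hpi)
      have hqi' : 0 < q i := hpq i hpi'
      simp only [hpi, if_false]
      have hlog : Real.log (q i / p i) ≤ q i / p i - 1 :=
        Real.log_le_sub_one_of_pos (by positivity)
      have h1 : Real.log (p i / q i) = - Real.log (q i / p i) := by
        rw [← Real.log_inv, inv_div]
      rw [h1]
      have h2 : p i * (q i / p i - 1) = q i - p i := by field_simp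
      nlinarith [mul_le_mul_of_nonneg_left hlog (hp i)]
  calc (0:ℝ) ≤ ∑ i, (p i - q i) := by rw [Finset.sum_sub_distrib]; linarith
  _ ≤ _ := Finset.sum_le_sum fun i _ => key i

/-! ### Stationary distributions of finite Markov chains -/

section Chain

variable {X : Type*} [Fintype X] [Nonempty X]

/-- one step of the chain, acting on distributions -/
private noncomputable def chainStep (P : X → X → ℝ) (p : X → ℝ) : X → ℝ :=
  fun y => ∑ x, p x * P x y

lemma aux_exists_stationary (P : X → X → ℝ)
    (hP0 : ∀ x y, 0 ≤ P x y) (hP1 : ∀ x, ∑ y, P x y = 1) :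
    ∃ μ : X → ℝ, (∀ x, 0 ≤ μ x) ∧ (∑ x, μ x = 1) ∧ ∀ y, μ y = ∑ x, μ x * P x y := by
  classical
  set D : Set (X → ℝ) := {p | (∀ x, 0 ≤ p x) ∧ ∑ x, p x = 1} with hD
  have hstep_mem : ∀ p ∈ D, chainStep P p ∈ D := by
    rintro p ⟨hp0, hp1⟩
    constructor
    · intro y; exact Finset.sum_nonneg fun x _ => mul_nonneg (hp0 x) (hP0 x y)
    · rw [show ∑ y, chainStep P p y = ∑ y, ∑ x, p x * P x y from rfl, Finset.sum_comm]
      simp_rw [← Finset.mul_sum, hP1, mul_one, hp1]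
  -- iterates
  set p0 : X → ℝ := fun _ => (Fintype.card X : ℝ)⁻¹ with hp0def
  have hp0mem : p0 ∈ D := by
    have hc : (0:ℝ) < Fintype.card X := by
      exact_mod_cast Fintype.card_pos
    refine ⟨fun x => by positivity, ?_⟩
    rw [Finset.sum_const, Finset.card_univ, nsmul_eq_mul]
    field_simp
  set it : ℕ → (X → ℝ) := fun n => (chainStep P)^[n] p0 with hit
  have hitsucc : ∀ n, it (n+1) = chainStep P (it n) := by
    intro n
    show (chainStep P)^[n+1] p0 = chainStep P ((chainStep P)^[n] p0)
    exact Function.iterate_succ_apply' _ _ _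
  have hitmem : ∀ n, it n ∈ D := by
    intro n; induction n with
    | zero => simpa [hit] using hp0mem
    | succ n ih => rw [hitsucc]; exact hstep_mem _ ih
  set avg : ℕ → (X → ℝ) := fun n y => ((n:ℝ)+1)⁻¹ * ∑ k ∈ Finset.range (n+1), it k y with havg
  have havgmem : ∀ n, avg n ∈ D := by
    intro n
    constructor
    · intro y
      exact mul_nonneg (by positivity)
        (Finset.sum_nonneg fun k _ => (hitmem k).1 y)
    · rw [show ∑ y, avg n y = ((n:ℝ)+1)⁻¹ * ∑ y, ∑ k ∈ Finset.range (n+1), it k y by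
        rw [Finset.mul_sum]]
      rw [Finset.sum_comm]
      have : ∀ k ∈ Finset.range (n+1), ∑ y, it k y = 1 := fun k _ => (hitmem k).2
      rw [Finset.sum_congr rfl this, Finset.sum_const, Finset.card_range, nsmul_eq_mul]
      push_cast
      field_simp
  -- compactness of D
  have hDb : ∀ p ∈ D, ∀ x, p x ≤ 1 := by
    rintro p ⟨hp0, hp1⟩ x
    calc p x ≤ ∑ x, p x := Finset.single_le_sum (fun i _ => hp0 i) (Finset.mem_univ x)
    _ = 1 := hp1
  have hDclosed : IsClosed D := by
    have h1 : IsClosed {p : X → ℝ | ∀ x, 0 ≤ p x} := by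
      have : {p : X → ℝ | ∀ x, 0 ≤ p x} = ⋂ x, {p : X → ℝ | 0 ≤ p x} := by
        ext p; simp
      rw [this]
      exact isClosed_iInter fun x => isClosed_le continuous_const (continuous_apply x)
    have h2 : IsClosed {p : X → ℝ | ∑ x, p x = 1} :=
      isClosed_eq (by continuity) continuous_const
    exact (h1.inter h2 : IsClosed _)
  have hDbounded : Bornology.IsBounded D := by
    apply Bornology.IsBounded.subset (Metric.isBounded_closedBall (x := (0 : X → ℝ)) (r := 1))
    intro p hp
    rw [Metric.mem_closedBall]
    rw [dist_pi_le_iff (by norm_num)]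
    intro x
    rw [Real.dist_eq]
    simp only [Pi.zero_apply, sub_zero]
    rw [abs_le]
    exact ⟨by linarith [hp.1 x], hDb p hp x⟩
  have hDcompact : IsCompact D := Metric.isCompact_of_isClosed_isBounded hDclosed hDbounded
  obtain ⟨μ, hμD, φ, hφ, hconv⟩ := hDcompact.tendsto_subseq havgmem
  refine ⟨μ, hμD.1, hμD.2, ?_⟩
  intro y
  have hconv_comp : ∀ x, Tendsto (fun n => avg (φ n) x) atTop (𝓝 (μ x)) := by
    intro x
    exact ((continuous_apply x).continuousAt.tendsto.comp hconv)
  have hkey : ∀ n, chainStep P (avg n) y = avg n y + ((n:ℝ)+1)⁻¹ * (it (n+1) y - it 0 y) := by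
    intro n
    have h1 : chainStep P (avg n) y = ((n:ℝ)+1)⁻¹ * ∑ k ∈ Finset.range (n+1), it (k+1) y := by
      rw [show chainStep P (avg n) y
          = ∑ x, (((n:ℝ)+1)⁻¹ * ∑ k ∈ Finset.range (n+1), it k x) * P x y from rfl]
      have hx : ∀ x ∈ Finset.univ, (((n:ℝ)+1)⁻¹ * ∑ k ∈ Finset.range (n+1), it k x) * P x y
          = ((n:ℝ)+1)⁻¹ * ∑ k ∈ Finset.range (n+1), it k x * P x y := by
        intro x _; rw [mul_assoc, Finset.sum_mul]
      rw [Finset.sum_congr rfl hx, ← Finset.mul_sum, Finset.sum_comm]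
      congr 1
      refine Finset.sum_congr rfl fun k _ => ?_
      rw [hitsucc k]; rfl
    have h2 : ∑ k ∈ Finset.range (n+1), it (k+1) y
        = (∑ k ∈ Finset.range (n+1), it k y) + (it (n+1) y - it 0 y) := by
      have e1 := Finset.sum_range_succ' (fun k => it k y) (n+1)
      have e2 := Finset.sum_range_succ (fun k => it k y) (n+1)
      linarith
    rw [h1, h2, mul_add]
  have t1 : Tendsto (fun n => chainStep P (avg (φ n)) y) atTop (𝓝 (chainStep P μ y)) := by
    show Tendsto (fun n => ∑ x, avg (φ n) x * P x y) atTop (𝓝 (∑ x, μ x * P x y))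
    exact tendsto_finset_sum _ fun x _ => (hconv_comp x).mul tendsto_const_nhds
  have t2 : Tendsto (fun n => chainStep P (avg (φ n)) y) atTop (𝓝 (μ y)) := by
    have ha : Tendsto (fun n => avg (φ n) y) atTop (𝓝 (μ y)) := hconv_comp y
    have hb : Tendsto (fun n => (((φ n : ℕ):ℝ)+1)⁻¹ * (it (φ n + 1) y - it 0 y)) atTop (𝓝 0) := by
      apply squeeze_zero_norm (a := fun n => (((φ n : ℕ):ℝ)+1)⁻¹)
      · intro n
        rw [norm_mul]
        have h1 : ‖((((φ n : ℕ)):ℝ)+1)⁻¹‖ = (((φ n : ℕ):ℝ)+1)⁻¹ := by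
          rw [Real.norm_eq_abs, abs_of_nonneg]; positivity
        have h2 : ‖it (φ n + 1) y - it 0 y‖ ≤ 1 := by
          rw [Real.norm_eq_abs, abs_le]
          constructor
          · linarith [(hitmem (φ n + 1)).1 y, hDb _ (hitmem 0) y]
          · linarith [hDb _ (hitmem (φ n + 1)) y, (hitmem 0).1 y]
        calc ‖((((φ n:ℕ)):ℝ)+1)⁻¹‖ * ‖it (φ n + 1) y - it 0 y‖
            ≤ ‖((((φ n:ℕ)):ℝ)+1)⁻¹‖ * 1 :=
              mul_le_mul_of_nonneg_left h2 (norm_nonneg _)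
        _ = (((φ n:ℕ):ℝ)+1)⁻¹ := by rw [mul_one, h1]
      · have hφtop : Tendsto (fun n => (φ n : ℕ)) atTop atTop := hφ.tendsto_atTop
        have hlim : Tendsto (fun m : ℕ => ((m:ℝ)+1)⁻¹) atTop (𝓝 0) := by
          apply Tendsto.comp tendsto_inv_atTop_zero
          apply tendsto_atTop_add_const_right
          exact tendsto_natCast_atTop_atTop
        exact hlim.comp hφtop
    have hsum := ha.add hb
    rw [add_zero] at hsum
    apply hsum.congr
    intro n
    exact (hkey (φ n)).symm
  exact (tendsto_nhds_unique t2 t1)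

lemma aux_stationary_pos {X : Type*} [Fintype X] (P : X → X → ℝ)
    (hP0 : ∀ x y, 0 ≤ P x y)
    (μ : X → ℝ) (hμ0 : ∀ x, 0 ≤ μ x) (hst : ∀ y, μ y = ∑ x, μ x * P x y)
    {x₀ : X} (hx₀ : 0 < μ x₀)
    (hconn : ∀ y, Relation.ReflTransGen (fun u v => 0 < P u v) x₀ y) :
    ∀ y, 0 < μ y := by
  intro y
  induction hconn y with
  | refl => exact hx₀
  | tail hab hbc ih =>
    rename_i b c
    rw [hst c]
    have h1 : μ b * P b c ≤ ∑ x, μ x * P x c :=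
      Finset.single_le_sum (fun i _ => mul_nonneg (hμ0 i) (hP0 i c)) (Finset.mem_univ b)
    have h2 : 0 < μ b * P b c := mul_pos ih hbc
    linarith

lemma aux_stationary_unique {X : Type*} [Fintype X] [Nonempty X] (P : X → X → ℝ)
    (hP0 : ∀ x y, 0 ≤ P x y)
    (hconn : ∀ x y, Relation.ReflTransGen (fun u v => 0 < P u v) x y)
    (μ ν : X → ℝ)
    (hμ0 : ∀ x, 0 ≤ μ x) (hμ1 : ∑ x, μ x = 1) (hμst : ∀ y, μ y = ∑ x, μ x * P x y)
    (hν0 : ∀ x, 0 ≤ ν x) (hν1 : ∑ x, ν x = 1) (hνst : ∀ y, ν y = ∑ x, ν x * P x y) :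
    μ = ν := by
  classical
  -- some positive entry of ν
  have hνex : ∃ x, 0 < ν x := by
    by_contra h
    push_neg at h
    have : ∑ x, ν x = 0 := le_antisymm (Finset.sum_nonpos fun x _ => h x)
      (Finset.sum_nonneg fun x _ => hν0 x)
    rw [hν1] at this; norm_num at this
  obtain ⟨xν, hxν⟩ := hνex
  have hνpos : ∀ x, 0 < ν x := aux_stationary_pos P hP0 ν hν0 hνst hxν (hconn xν)
  obtain ⟨x₀, _, hx₀min⟩ := Finset.exists_min_image Finset.univ (fun x => μ x / ν x)
    ⟨Classical.arbitrary X, Finset.mem_univ _⟩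
  set c : ℝ := μ x₀ / ν x₀ with hc
  set w : X → ℝ := fun x => μ x - c * ν x with hw
  have hw0 : ∀ x, 0 ≤ w x := by
    intro x
    have h1 : c ≤ μ x / ν x := hx₀min x (Finset.mem_univ x)
    have h2 : c * ν x ≤ (μ x / ν x) * ν x := mul_le_mul_of_nonneg_right h1 (hν0 x)
    rw [div_mul_cancel₀ _ (ne_of_gt (hνpos x))] at h2
    simpa [hw] using h2
  have hwst : ∀ y, w y = ∑ x, w x * P x y := by
    intro y
    simp only [hw, sub_mul, Finset.sum_sub_distrib]
    rw [← hμst y]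
    have : ∑ x, c * ν x * P x y = c * ∑ x, ν x * P x y := by
      rw [Finset.mul_sum]; exact Finset.sum_congr rfl fun x _ => by ring
    rw [this, ← hνst y]
  have hwx₀ : w x₀ = 0 := by
    simp [hw, hc, div_mul_cancel₀ _ (ne_of_gt (hνpos x₀))]
  have hwzero : ∀ x, w x = 0 := by
    by_contra h
    push_neg at h
    obtain ⟨y, hy⟩ := h
    have hypos : 0 < w y := lt_of_le_of_ne (hw0 y) (Ne.symm hy)
    have := aux_stationary_pos P hP0 w hw0 hwst hypos (hconn y) x₀
    rw [hwx₀] at this; exact lt_irrefl 0 this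
  have hμcν : ∀ x, μ x = c * ν x := by
    intro x; have := hwzero x; simp [hw] at this; linarith
  have hcsum : ∑ x, μ x = c * ∑ x, ν x := by
    rw [Finset.mul_sum]; exact Finset.sum_congr rfl fun x _ => hμcν x
  rw [hμ1, hν1, mul_one] at hcsum
  funext x
  rw [hμcν x, ← hcsum, one_mul]

end Chain



/-! ### MDP-specific auxiliary lemmas -/

/-- real-valued relative entropy with the `0·log(0/t)=0` convention -/
noncomputable def rKLS {ι : Type*} [Fintype ι] (p q : ι → ℝ) : ℝ :=
  ∑ i, if p i = 0 then (0:ℝ) else p i * Real.log (p i / q i)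

lemma aux_rKLS_self {ι : Type*} [Fintype ι] (p : ι → ℝ) : rKLS p p = 0 := by
  rw [rKLS]
  apply Finset.sum_eq_zero
  intro i _
  by_cases h : p i = 0
  · simp [h]
  · rw [if_neg h, div_self h, Real.log_one, mul_zero]

lemma aux_KLS_eq_coe (p q : S → ℝ) (h : ∀ s, p s ≠ 0 → q s ≠ 0) :
    KLS S p q = ((rKLS p q : ℝ) : EReal) := by
  rw [KLS, rKLS, aux_coe_sum]
  refine Finset.sum_congr rfl fun s _ => ?_
  by_cases hp : p s = 0
  · simp [hp]
  · rw [if_neg hp, if_neg (h s hp), if_neg hp]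

lemma aux_KLS_ne_bot (p q : S → ℝ) : KLS S p q ≠ ⊥ := by
  rw [KLS]
  apply aux_sum_ne_bot
  intro s _
  split_ifs
  · exact EReal.zero_ne_bot
  · exact (bot_lt_top (α := EReal)).ne'
  · exact EReal.coe_ne_bot _

lemma aux_KLS_top (p q : S → ℝ) {s₀ : S} (h1 : p s₀ ≠ 0) (h2 : q s₀ = 0) :
    KLS S p q = ⊤ := by
  rw [KLS]
  apply aux_sum_eq_top
  · intro s _
    split_ifs
    · exact EReal.zero_ne_bot
    · exact (bot_lt_top (α := EReal)).ne'
    · exact EReal.coe_ne_bot _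
  · exact Finset.mem_univ s₀
  · rw [if_neg h1, if_pos h2]

lemma aux_KLS_nonneg (p q : S → ℝ) (hp : ∀ s, 0 ≤ p s) (hq : ∀ s, 0 ≤ q s)
    (hsum : ∑ s, q s ≤ ∑ s, p s) : 0 ≤ KLS S p q := by
  by_cases hc : ∀ s, p s ≠ 0 → q s ≠ 0
  · rw [aux_KLS_eq_coe S p q hc]
    have h := aux_gibbs p q hp hq
      (fun i hpi => lt_of_le_of_ne (hq i) (Ne.symm (hc i (ne_of_gt hpi)))) hsum
    exact_mod_cast h
  · push_neg at hc
    obtain ⟨s₀, h1, h2⟩ := hc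
    rw [aux_KLS_top S p q h1 h2]
    exact le_top

lemma aux_KLS_self' (p : S → ℝ) : KLS S p p = 0 := by
  rw [KLS]
  apply Finset.sum_eq_zero
  intro s _
  by_cases h : p s = 0
  · simp [h]
  · rw [if_neg h, if_neg h, div_self h, Real.log_one, mul_zero]
    rfl

lemma aux_nonempty_S (ξ : S × A × S → ℝ) (hξ : ξ ∈ XiSet S A) : Nonempty S := by
  by_contra h
  haveI : IsEmpty S := not_nonempty_iff.mp h
  have h2 := hξ.2.1
  rw [Finset.univ_eq_empty, Finset.sum_empty] at h2
  norm_num at h2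

lemma aux_nonempty_A (ξ : S × A × S → ℝ) (hξ : ξ ∈ XiSet S A) : Nonempty A := by
  by_contra h
  haveI : IsEmpty A := not_nonempty_iff.mp h
  have h2 := hξ.2.1
  rw [Finset.univ_eq_empty, Finset.sum_empty] at h2
  norm_num at h2

lemma aux_muXi_nonneg (ξ : S × A × S → ℝ) (h0 : ∀ z, 0 ≤ ξ z) (x : S × A) :
    0 ≤ muXi S A ξ x :=
  Finset.sum_nonneg fun s' _ => h0 _

lemma aux_muXi_pos (ξ : S × A × S → ℝ) (hξ : ξ ∈ Xi0Set S A) (x : S × A) :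
    0 < muXi S A ξ x := by
  rcases hξ with ⟨⟨h0, h1, _⟩, hconn⟩
  by_contra hle
  push_neg at hle
  have hzero : ∀ s', ξ (x.1, x.2, s') = 0 := by
    intro s'
    have hn := aux_muXi_nonneg S A ξ h0 x
    have heq : muXi S A ξ x = 0 := le_antisymm hle hn
    have := (Finset.sum_eq_zero_iff_of_nonneg (fun s' _ => h0 (x.1, x.2, s'))).1 heq
    exact this s' (Finset.mem_univ s')
  -- some z₀ with positive mass
  have hz : ∃ z, 0 < ξ z := by
    by_contra h
    push_neg at h
    have : ∑ z, ξ z = 0 := le_antisymm (Finset.sum_nonpos fun z _ => h z)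
      (Finset.sum_nonneg fun z _ => h0 z)
    rw [h1] at this; norm_num at this
  obtain ⟨z₀, hz₀⟩ := hz
  set y : S × A := (z₀.1, z₀.2.1) with hy
  have hconn' := hconn x y
  rcases Relation.ReflTransGen.cases_head hconn' with heq | ⟨c, hxc, _⟩
  · -- x = y, but then muXi x ≥ ξ z₀ > 0
    have : ξ (x.1, x.2, z₀.2.2) = ξ z₀ := by rw [heq]
    rw [hzero z₀.2.2] at this
    rw [← this] at hz₀
    exact lt_irrefl 0 hz₀
  · rw [hzero c.1] at hxc
    exact lt_irrefl 0 hxc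

lemma aux_exists_pos (ξ : S × A × S → ℝ) (h0 : ∀ z, 0 ≤ ξ z) (x : S × A)
    (hx : 0 < muXi S A ξ x) : ∃ s', 0 < ξ (x.1, x.2, s') := by
  by_contra h
  push_neg at h
  have : muXi S A ξ x = 0 := le_antisymm (Finset.sum_nonpos fun s' _ => h s')
    (aux_muXi_nonneg S A ξ h0 x)
  rw [this] at hx; exact lt_irrefl 0 hx

lemma aux_rowXi_eq (ξ : S × A × S → ℝ) (s : S) :
    rowXi S A ξ s = ∑ a, muXi S A ξ (s, a) := rfl

lemma aux_piXi_eq (ξ : S × A × S → ℝ) (s : S) (a : A) :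
    piXi S A ξ s a = muXi S A ξ (s, a) / rowXi S A ξ s := rfl

lemma aux_rowXi_pos (ξ : S × A × S → ℝ) (hA : Nonempty A)
    (h0 : ∀ z, 0 ≤ ξ z) (hm : ∀ x, 0 < muXi S A ξ x) (s : S) :
    0 < rowXi S A ξ s := by
  have a₀ : A := Classical.arbitrary A
  rw [aux_rowXi_eq]
  calc (0:ℝ) < muXi S A ξ (s, a₀) := hm (s, a₀)
  _ ≤ ∑ a, muXi S A ξ (s, a) :=
      Finset.single_le_sum (fun a _ => aux_muXi_nonneg S A ξ h0 (s, a)) (Finset.mem_univ a₀)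

lemma aux_muXi0_pos (ξ' ξ0 : S × A × S → ℝ) (hξ' : ξ' ∈ Xi0Set S A)
    (h00 : ∀ z, 0 ≤ ξ0 z) (hsupp : ∀ z, 0 < ξ' z → 0 < ξ0 z) (x : S × A) :
    0 < muXi S A ξ0 x := by
  obtain ⟨s', hs'⟩ := aux_exists_pos S A ξ' hξ'.1.1 x (aux_muXi_pos S A ξ' hξ' x)
  calc (0:ℝ) < ξ0 (x.1, x.2, s') := hsupp _ hs'
  _ ≤ muXi S A ξ0 x :=
      Finset.single_le_sum (f := fun t => ξ0 (x.1, x.2, t)) (fun i _ => h00 _) (Finset.mem_univ s')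


lemma aux_sum3 (g : S × A × S → ℝ) :
    ∑ z : S × A × S, g z = ∑ s : S, ∑ a : A, ∑ s' : S, g (s, a, s') := by
  rw [Fintype.sum_prod_type]
  exact Finset.sum_congr rfl fun s _ => by rw [Fintype.sum_prod_type]

lemma aux_sum2 (g : S × A → ℝ) :
    ∑ x : S × A, g x = ∑ s : S, ∑ a : A, g (s, a) := Fintype.sum_prod_type _

/-- The chain-rule decomposition of the conditional relative entropy, real-valued version. -/
lemma aux_decomp (ξ' ξ0 : S × A × S → ℝ) (hξ' : ξ' ∈ Xi0Set S A)
    (h00 : ∀ z, 0 ≤ ξ0 z) (hsupp : ∀ z, 0 < ξ' z → 0 < ξ0 z) :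
    (∑ z : S × A × S, if ξ' z = 0 then (0:ℝ)
       else ξ' z * (Real.log (ξ' z / rowXi S A ξ' z.1) - Real.log (ξ0 z / rowXi S A ξ0 z.1)))
    = (∑ s : S, rowXi S A ξ' s *
        rKLS (fun a => piXi S A ξ' s a) (fun a => muXi S A ξ0 (s, a) / rowXi S A ξ0 s))
    + ∑ x : S × A, muXi S A ξ' x *
        rKLS (fun s' => QXi S A ξ' x.1 x.2 s') (fun s' => QXi S A ξ0 x.1 x.2 s') := by
  have hA : Nonempty A := aux_nonempty_A S A ξ' hξ'.1
  have hξ'0 : ∀ z, 0 ≤ ξ' z := hξ'.1.1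
  have hmp : ∀ x, 0 < muXi S A ξ' x := aux_muXi_pos S A ξ' hξ'
  have hrp : ∀ s, 0 < rowXi S A ξ' s := aux_rowXi_pos S A ξ' hA hξ'0 hmp
  have hm0 : ∀ x, 0 < muXi S A ξ0 x := aux_muXi0_pos S A ξ' ξ0 hξ' h00 hsupp
  have hr0 : ∀ s, 0 < rowXi S A ξ0 s := aux_rowXi_pos S A ξ0 hA h00 hm0
  have hsupp' : ∀ z, ξ' z ≠ 0 → ξ0 z ≠ 0 := fun z hz =>
    ne_of_gt (hsupp z (lt_of_le_of_ne (hξ'0 z) (Ne.symm hz)))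
  -- policy term, per state
  have hB : ∀ s, rowXi S A ξ' s *
      rKLS (fun a => piXi S A ξ' s a) (fun a => muXi S A ξ0 (s, a) / rowXi S A ξ0 s)
      = ∑ a, muXi S A ξ' (s, a) *
          ((Real.log (muXi S A ξ' (s, a)) - Real.log (rowXi S A ξ' s))
            - (Real.log (muXi S A ξ0 (s, a)) - Real.log (rowXi S A ξ0 s))) := by
    intro s
    rw [rKLS, Finset.mul_sum]
    refine Finset.sum_congr rfl fun a _ => ?_
    have hπ : piXi S A ξ' s a ≠ 0 := ne_of_gt (by
      rw [aux_piXi_eq]; exact div_pos (hmp (s, a)) (hrp s))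
    rw [if_neg hπ, aux_piXi_eq]
    rw [Real.log_div (ne_of_gt (div_pos (hmp (s,a)) (hrp s)))
        (ne_of_gt (div_pos (hm0 (s,a)) (hr0 s))),
      Real.log_div (ne_of_gt (hmp (s,a))) (ne_of_gt (hrp s)),
      Real.log_div (ne_of_gt (hm0 (s,a))) (ne_of_gt (hr0 s))]
    have hk : ∀ E : ℝ, rowXi S A ξ' s * (muXi S A ξ' (s, a) / rowXi S A ξ' s * E)
        = muXi S A ξ' (s, a) * E := by
      intro E
      rw [div_mul_eq_mul_div, mul_comm (rowXi S A ξ' s), div_mul_cancel₀ _ (ne_of_gt (hrp s))]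
    rw [hk]
  -- kernel term, per state-action pair
  have hC : ∀ s a, muXi S A ξ' (s, a) *
      rKLS (fun s' => QXi S A ξ' s a s') (fun s' => QXi S A ξ0 s a s')
      = ∑ s', (if ξ' (s, a, s') = 0 then (0:ℝ) else ξ' (s, a, s') *
          ((Real.log (ξ' (s, a, s')) - Real.log (muXi S A ξ' (s, a)))
            - (Real.log (ξ0 (s, a, s')) - Real.log (muXi S A ξ0 (s, a))))) := by
    intro s a
    rw [rKLS, Finset.mul_sum]
    refine Finset.sum_congr rfl fun s' _ => ?_
    by_cases h : ξ' (s, a, s') = 0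
    · rw [if_pos h, if_pos (by rw [QXi, h, zero_div]), mul_zero]
    · have hξ'z : 0 < ξ' (s, a, s') := lt_of_le_of_ne (hξ'0 _) (Ne.symm h)
      have hξ0z : 0 < ξ0 (s, a, s') := hsupp _ hξ'z
      have hq' : QXi S A ξ' s a s' ≠ 0 := ne_of_gt (by rw [QXi]; exact div_pos hξ'z (hmp (s,a)))
      have hq0 : QXi S A ξ0 s a s' ≠ 0 := ne_of_gt (by rw [QXi]; exact div_pos hξ0z (hm0 (s,a)))
      rw [if_neg hq', if_neg h, QXi, QXi]
      rw [Real.log_div (div_ne_zero (ne_of_gt hξ'z) (ne_of_gt (hmp (s,a))))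
          (div_ne_zero (ne_of_gt hξ0z) (ne_of_gt (hm0 (s,a)))),
        Real.log_div (ne_of_gt hξ'z) (ne_of_gt (hmp (s,a))),
        Real.log_div (ne_of_gt hξ0z) (ne_of_gt (hm0 (s,a)))]
      have hk : ∀ E : ℝ, muXi S A ξ' (s, a) * (ξ' (s, a, s') / muXi S A ξ' (s, a) * E)
          = ξ' (s, a, s') * E := by
        intro E
        rw [div_mul_eq_mul_div, mul_comm (muXi S A ξ' (s, a)), div_mul_cancel₀ _ (ne_of_gt (hmp (s, a)))]
      rw [hk]
  -- expand everything as triple sums and combine termwise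
  rw [aux_sum3, aux_sum2]
  rw [Finset.sum_congr rfl (fun s (_ : s ∈ Finset.univ) => hB s),
    Finset.sum_congr rfl (fun s (_ : s ∈ Finset.univ) =>
      Finset.sum_congr rfl (fun a (_ : a ∈ Finset.univ) => hC s a)),
    ← Finset.sum_add_distrib]
  refine Finset.sum_congr rfl fun s _ => ?_
  rw [← Finset.sum_add_distrib]
  refine Finset.sum_congr rfl fun a _ => ?_
  -- expand muXi ξ' (s,a) = ∑ s' ξ'
  have hmu : muXi S A ξ' (s, a) *
      ((Real.log (muXi S A ξ' (s, a)) - Real.log (rowXi S A ξ' s))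
        - (Real.log (muXi S A ξ0 (s, a)) - Real.log (rowXi S A ξ0 s)))
      = ∑ s', ξ' (s, a, s') *
        ((Real.log (muXi S A ξ' (s, a)) - Real.log (rowXi S A ξ' s))
          - (Real.log (muXi S A ξ0 (s, a)) - Real.log (rowXi S A ξ0 s))) := by
    rw [show muXi S A ξ' (s, a) = ∑ s', ξ' (s, a, s') from rfl, Finset.sum_mul]
  rw [hmu, ← Finset.sum_add_distrib]
  refine Finset.sum_congr rfl fun s' _ => ?_
  by_cases h : ξ' (s, a, s') = 0
  · rw [if_pos h, if_pos h, h]; ring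
  · have hξ'z : 0 < ξ' (s, a, s') := lt_of_le_of_ne (hξ'0 _) (Ne.symm h)
    have hξ0z : 0 < ξ0 (s, a, s') := hsupp _ hξ'z
    rw [if_neg h, if_neg h]
    rw [Real.log_div (ne_of_gt hξ'z) (ne_of_gt (hrp s)),
      Real.log_div (ne_of_gt hξ0z) (ne_of_gt (hr0 s))]
    ring

lemma aux_Dmdp_eq_coe (ξ' ξ0 : S × A × S → ℝ) (hsupp : ∀ z, ξ' z ≠ 0 → ξ0 z ≠ 0) :
    Dmdp S A ξ' ξ0 = ((∑ z : S × A × S, if ξ' z = 0 then (0:ℝ)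
      else ξ' z * (Real.log (ξ' z / rowXi S A ξ' z.1) - Real.log (ξ0 z / rowXi S A ξ0 z.1))
      : ℝ) : EReal) := by
  rw [Dmdp, aux_coe_sum]
  refine Finset.sum_congr rfl fun z _ => ?_
  by_cases h : ξ' z = 0
  · simp [h]
  · rw [if_neg h, if_neg (hsupp z h), if_neg h]

lemma aux_Dmdp_top (ξ' ξ0 : S × A × S → ℝ) {z₀ : S × A × S}
    (h1 : ξ' z₀ ≠ 0) (h2 : ξ0 z₀ = 0) : Dmdp S A ξ' ξ0 = ⊤ := by
  rw [Dmdp]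
  apply aux_sum_eq_top
  · intro z _
    split_ifs
    · exact EReal.zero_ne_bot
    · exact (bot_lt_top (α := EReal)).ne'
    · exact EReal.coe_ne_bot _
  · exact Finset.mem_univ z₀
  · rw [if_neg h1, if_pos h2]

lemma aux_Dmdp_self (ξ' : S × A × S → ℝ) : Dmdp S A ξ' ξ' = 0 := by
  rw [Dmdp]
  apply Finset.sum_eq_zero
  intro z _
  by_cases h : ξ' z = 0
  · rw [if_pos h]
  · rw [if_neg h, if_neg h, sub_self, mul_zero]
    rfl


/-- abbreviation for the uncertainty-set functional -/
noncomputable def gE (ξ' : S × A × S → ℝ) (Q : S → A → S → ℝ) : EReal :=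
  ∑ x : S × A, ((muXi S A ξ' x : ℝ) : EReal) *
    KLS S (fun s' => QXi S A ξ' x.1 x.2 s') (fun s' => Q x.1 x.2 s')

lemma aux_inUnc_iff (ξ' : S × A × S → ℝ) (ρ : ℝ) (Q : S → A → S → ℝ) :
    InUncertaintySet S A ξ' ρ Q ↔ gE S A ξ' Q ≤ (ρ : EReal) := Iff.rfl

/-- real version of `gE` (meaningful on the support) -/
noncomputable def rG (ξ' : S × A × S → ℝ) (Q : S → A → S → ℝ) : ℝ :=
  ∑ x : S × A, muXi S A ξ' x *
    rKLS (fun s' => QXi S A ξ' x.1 x.2 s') (fun s' => Q x.1 x.2 s')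

lemma aux_gE_eq_coe (ξ' : S × A × S → ℝ) (Q : S → A → S → ℝ)
    (h : ∀ x : S × A, ∀ s', QXi S A ξ' x.1 x.2 s' ≠ 0 → Q x.1 x.2 s' ≠ 0) :
    gE S A ξ' Q = ((rG S A ξ' Q : ℝ) : EReal) := by
  rw [gE, rG, aux_coe_sum]
  refine Finset.sum_congr rfl fun x _ => ?_
  rw [aux_KLS_eq_coe S _ _ (h x), ← EReal.coe_mul]

lemma aux_QXi_pos_iff (ξ : S × A × S → ℝ) (h0 : ∀ z, 0 ≤ ξ z)
    (x : S × A) (hm : 0 < muXi S A ξ x) (s' : S) :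
    0 < QXi S A ξ x.1 x.2 s' ↔ 0 < ξ (x.1, x.2, s') := by
  rw [QXi]
  constructor
  · intro h
    rcases lt_or_eq_of_le (h0 (x.1, x.2, s')) with h' | h'
    · exact h'
    · exfalso
      rw [show muXi S A ξ (x.1, x.2) = muXi S A ξ x from by rw [Prod.mk.eta], ← h', zero_div] at h
      exact lt_irrefl 0 h
  · intro h
    rw [show muXi S A ξ (x.1, x.2) = muXi S A ξ x from by rw [Prod.mk.eta]]
    exact div_pos h hm

lemma aux_gE_nonneg_terms (ξ' : S × A × S → ℝ) (hξ' : ξ' ∈ Xi0Set S A)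
    (Q : S → A → S → ℝ) (hQ : Q ∈ kernelSet S A) (x : S × A) :
    (0 : EReal) ≤ ((muXi S A ξ' x : ℝ) : EReal) *
      KLS S (fun s' => QXi S A ξ' x.1 x.2 s') (fun s' => Q x.1 x.2 s') := by
  have hmp := aux_muXi_pos S A ξ' hξ' x
  have hK : (0 : EReal) ≤ KLS S (fun s' => QXi S A ξ' x.1 x.2 s') (fun s' => Q x.1 x.2 s') := by
    apply aux_KLS_nonneg
    · intro s'
      rw [QXi]
      exact div_nonneg (hξ'.1.1 _) (aux_muXi_nonneg S A ξ' hξ'.1.1 _)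
    · exact fun s' => (hQ x.1 x.2).1 s'
    · rw [(hQ x.1 x.2).2]
      have : ∀ s' : S, QXi S A ξ' x.1 x.2 s' = ξ' (x.1, x.2, s') / muXi S A ξ' x := by
        intro s'; rw [QXi, Prod.mk.eta]
      rw [Finset.sum_congr rfl fun s' _ => this s', ← Finset.sum_div]
      rw [show (∑ s', ξ' (x.1, x.2, s')) = muXi S A ξ' x from rfl]
      rw [div_self (ne_of_gt hmp)]
  calc (0 : EReal) = ((muXi S A ξ' x : ℝ) : EReal) * 0 := by rw [mul_zero]
  _ ≤ _ := by
      apply mul_le_mul_of_nonneg_left hK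
      exact_mod_cast le_of_lt hmp

/-- Feasibility forces positivity of the kernel on the support of `ξ'`. -/
lemma aux_gE_supp (ξ' : S × A × S → ℝ) (hξ' : ξ' ∈ Xi0Set S A) (ρ : ℝ)
    (Q : S → A → S → ℝ) (hQ : Q ∈ kernelSet S A) (hg : gE S A ξ' Q ≤ (ρ : EReal)) :
    ∀ x : S × A, ∀ s', 0 < QXi S A ξ' x.1 x.2 s' → 0 < Q x.1 x.2 s' := by
  intro x s' hpos
  by_contra hle
  push_neg at hle
  have hq0 : Q x.1 x.2 s' = 0 := le_antisymm hle ((hQ x.1 x.2).1 s')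
  have hKtop : KLS S (fun t => QXi S A ξ' x.1 x.2 t) (fun t => Q x.1 x.2 t) = ⊤ :=
    aux_KLS_top S _ _ (ne_of_gt hpos) hq0
  have hmp := aux_muXi_pos S A ξ' hξ' x
  have hterm : ((muXi S A ξ' x : ℝ) : EReal) *
      KLS S (fun t => QXi S A ξ' x.1 x.2 t) (fun t => Q x.1 x.2 t) = ⊤ := by
    rw [hKtop]
    apply EReal.mul_top_of_pos
    exact_mod_cast hmp
  have htop : gE S A ξ' Q = ⊤ := by
    rw [gE]
    apply aux_sum_eq_top
    · intro y _
      exact ne_bot_of_le_ne_bot EReal.zero_ne_bot (aux_gE_nonneg_terms S A ξ' hξ' Q hQ y)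
    · exact Finset.mem_univ x
    · exact hterm
  rw [htop] at hg
  exact absurd (le_antisymm le_top hg) (ne_of_gt (EReal.coe_lt_top ρ)).symm

/-- Chain rule inequality: the kernel part of `D_mdp` is dominated by `D_mdp`. -/
lemma aux_kernel_le_Dmdp (ξ' ξ0 : S × A × S → ℝ) (hξ' : ξ' ∈ Xi0Set S A)
    (hξ0 : ξ0 ∈ XiSet S A) :
    gE S A ξ' (QXi S A ξ0) ≤ Dmdp S A ξ' ξ0 := by
  by_cases hsupp : ∀ z, 0 < ξ' z → 0 < ξ0 z
  · have hA : Nonempty A := aux_nonempty_A S A ξ' hξ'.1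
    have hξ'0 : ∀ z, 0 ≤ ξ' z := hξ'.1.1
    have h00 : ∀ z, 0 ≤ ξ0 z := hξ0.1
    have hmp : ∀ x, 0 < muXi S A ξ' x := aux_muXi_pos S A ξ' hξ'
    have hrp : ∀ s, 0 < rowXi S A ξ' s := aux_rowXi_pos S A ξ' hA hξ'0 hmp
    have hm0 : ∀ x, 0 < muXi S A ξ0 x := aux_muXi0_pos S A ξ' ξ0 hξ' h00 hsupp
    have hr0 : ∀ s, 0 < rowXi S A ξ0 s := aux_rowXi_pos S A ξ0 hA h00 hm0
    have hsupp' : ∀ z, ξ' z ≠ 0 → ξ0 z ≠ 0 := fun z hz =>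
      ne_of_gt (hsupp z (lt_of_le_of_ne (hξ'0 z) (Ne.symm hz)))
    have hQs : ∀ x : S × A, ∀ s', QXi S A ξ' x.1 x.2 s' ≠ 0 → QXi S A ξ0 x.1 x.2 s' ≠ 0 := by
      intro x s' h
      have h1 : ξ' (x.1, x.2, s') ≠ 0 := by
        intro hc; apply h; rw [QXi, hc, zero_div]
      have h2 : ξ0 (x.1, x.2, s') ≠ 0 := hsupp' _ h1
      rw [QXi]
      exact div_ne_zero h2 (ne_of_gt (hm0 (x.1, x.2)))
    rw [aux_gE_eq_coe S A ξ' _ hQs, aux_Dmdp_eq_coe S A ξ' ξ0 hsupp',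
      aux_decomp S A ξ' ξ0 hξ' h00 hsupp]
    rw [EReal.coe_le_coe_iff]
    have hpol : 0 ≤ ∑ s : S, rowXi S A ξ' s *
        rKLS (fun a => piXi S A ξ' s a) (fun a => muXi S A ξ0 (s, a) / rowXi S A ξ0 s) := by
      apply Finset.sum_nonneg
      intro s _
      apply mul_nonneg (le_of_lt (hrp s))
      rw [rKLS]
      apply aux_gibbs
      · intro a; rw [aux_piXi_eq]; exact le_of_lt (div_pos (hmp (s,a)) (hrp s))
      · intro a; exact le_of_lt (div_pos (hm0 (s,a)) (hr0 s))
      · intro a _; exact div_pos (hm0 (s,a)) (hr0 s)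
      · have e1 : ∑ a, muXi S A ξ0 (s, a) / rowXi S A ξ0 s = 1 := by
          rw [← Finset.sum_div, ← aux_rowXi_eq, div_self (ne_of_gt (hr0 s))]
        have e2 : ∑ a, piXi S A ξ' s a = 1 := by
          rw [Finset.sum_congr rfl fun a _ => aux_piXi_eq S A ξ' s a,
            ← Finset.sum_div, ← aux_rowXi_eq, div_self (ne_of_gt (hrp s))]
        rw [e1, e2]
    have : rG S A ξ' (QXi S A ξ0) = ∑ x : S × A, muXi S A ξ' x *
        rKLS (fun s' => QXi S A ξ' x.1 x.2 s') (fun s' => QXi S A ξ0 x.1 x.2 s') := rfl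
    rw [this]
    linarith
  · push_neg at hsupp
    obtain ⟨z₀, h1, h2⟩ := hsupp
    have h1' : ξ' z₀ ≠ 0 := ne_of_gt h1
    have h2' : ξ0 z₀ = 0 := le_antisymm h2 (hξ0.1 z₀)
    rw [aux_Dmdp_top S A ξ' ξ0 h1' h2']
    exact le_top

/-- Chain rule equality when the behavioral policy of `ξ0` matches that of `ξ'`. -/
lemma aux_Dmdp_eq_kernel (ξ' ξ0 : S × A × S → ℝ) (hξ' : ξ' ∈ Xi0Set S A)
    (hξ0 : ξ0 ∈ XiSet S A) (hsupp : ∀ z, 0 < ξ' z → 0 < ξ0 z)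
    (hpol : ∀ s a, muXi S A ξ0 (s, a) = piXi S A ξ' s a * rowXi S A ξ0 s) :
    Dmdp S A ξ' ξ0 = gE S A ξ' (QXi S A ξ0) := by
  have hA : Nonempty A := aux_nonempty_A S A ξ' hξ'.1
  have hξ'0 : ∀ z, 0 ≤ ξ' z := hξ'.1.1
  have h00 : ∀ z, 0 ≤ ξ0 z := hξ0.1
  have hmp : ∀ x, 0 < muXi S A ξ' x := aux_muXi_pos S A ξ' hξ'
  have hrp : ∀ s, 0 < rowXi S A ξ' s := aux_rowXi_pos S A ξ' hA hξ'0 hmp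
  have hm0 : ∀ x, 0 < muXi S A ξ0 x := aux_muXi0_pos S A ξ' ξ0 hξ' h00 hsupp
  have hr0 : ∀ s, 0 < rowXi S A ξ0 s := aux_rowXi_pos S A ξ0 hA h00 hm0
  have hsupp' : ∀ z, ξ' z ≠ 0 → ξ0 z ≠ 0 := fun z hz =>
    ne_of_gt (hsupp z (lt_of_le_of_ne (hξ'0 z) (Ne.symm hz)))
  have hQs : ∀ x : S × A, ∀ s', QXi S A ξ' x.1 x.2 s' ≠ 0 → QXi S A ξ0 x.1 x.2 s' ≠ 0 := by
    intro x s' h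
    have h1 : ξ' (x.1, x.2, s') ≠ 0 := by
      intro hc; apply h; rw [QXi, hc, zero_div]
    exact div_ne_zero (hsupp' _ h1) (ne_of_gt (hm0 (x.1, x.2)))
  rw [aux_gE_eq_coe S A ξ' _ hQs, aux_Dmdp_eq_coe S A ξ' ξ0 hsupp',
    aux_decomp S A ξ' ξ0 hξ' h00 hsupp]
  have hzero : ∀ s : S, rowXi S A ξ' s *
      rKLS (fun a => piXi S A ξ' s a) (fun a => muXi S A ξ0 (s, a) / rowXi S A ξ0 s) = 0 := by
    intro s
    have : (fun a => muXi S A ξ0 (s, a) / rowXi S A ξ0 s) = fun a => piXi S A ξ' s a := by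
      funext a
      rw [hpol s a, mul_div_cancel_right₀ _ (ne_of_gt (hr0 s))]
    rw [this, aux_rKLS_self, mul_zero]
  rw [Finset.sum_congr rfl fun s _ => hzero s, Finset.sum_const, smul_zero, zero_add]
  rfl


lemma aux_QXi_rowsum (ξ0 : S × A × S → ℝ) (hm : ∀ x : S × A, 0 < muXi S A ξ0 x)
    (s : S) (a : A) : ∑ s', QXi S A ξ0 s a s' = 1 := by
  have : ∀ s', QXi S A ξ0 s a s' = ξ0 (s, a, s') / muXi S A ξ0 (s, a) := fun s' => rfl
  rw [Finset.sum_congr rfl fun s' _ => this s', ← Finset.sum_div,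
    show (∑ s', ξ0 (s, a, s')) = muXi S A ξ0 (s, a) from rfl,
    div_self (ne_of_gt (hm (s, a)))]

lemma aux_QXi_kernel (ξ0 : S × A × S → ℝ) (h0 : ∀ z, 0 ≤ ξ0 z)
    (hm : ∀ x : S × A, 0 < muXi S A ξ0 x) : QXi S A ξ0 ∈ kernelSet S A := by
  intro s a
  constructor
  · intro s'
    rw [QXi]
    exact div_nonneg (h0 _) (le_of_lt (hm (s, a)))
  · exact aux_QXi_rowsum S A ξ0 hm s a

lemma aux_V_shift (r : S → A → ℝ) (ξ0 ζ : S × A × S → ℝ) (μ : S × A → ℝ)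
    (hm : ∀ x : S × A, 0 < muXi S A ξ0 x)
    (hζ : ∀ s a s', ζ (s, a, s') = QXi S A ξ0 s a s' * μ (s, a)) :
    V S A r ζ = ∑ x : S × A, r x.1 x.2 * μ x := by
  rw [V, aux_sum3, aux_sum2]
  refine Finset.sum_congr rfl fun s _ => Finset.sum_congr rfl fun a _ => ?_
  have : ∀ s', r s a * ζ (s, a, s') = r s a * μ (s, a) * QXi S A ξ0 s a s' := by
    intro s'; rw [hζ]; ring
  rw [Finset.sum_congr rfl fun s' _ => this s', ← Finset.mul_sum,
    aux_QXi_rowsum S A ξ0 hm s a, mul_one]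

lemma aux_conn_of_supp (ξ' : S × A × S → ℝ) (hξ' : ξ' ∈ Xi0Set S A)
    (Q : S → A → S → ℝ)
    (hQsupp : ∀ x : S × A, ∀ s', 0 < QXi S A ξ' x.1 x.2 s' → 0 < Q x.1 x.2 s') :
    ∀ x y : S × A, Relation.ReflTransGen (fun u v : S × A => 0 < Q u.1 u.2 v.1) x y := by
  intro x y
  refine Relation.ReflTransGen.mono ?_ _ _ (hξ'.2 x y)
  intro u v h
  exact hQsupp u v.1 ((aux_QXi_pos_iff S A ξ' hξ'.1.1 u (aux_muXi_pos S A ξ' hξ' u) v.1).2 h)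

lemma aux_V_lb (r : S → A → ℝ) (ζ : S × A × S → ℝ) (hζ : ζ ∈ XiSet S A) :
    -(∑ z : S × A × S, |r z.1 z.2.1|) ≤ V S A r ζ := by
  rw [V]
  have h1 : ∀ z ∈ Finset.univ (α := S × A × S), ζ z ≤ 1 := by
    intro z _
    calc ζ z ≤ ∑ w, ζ w := Finset.single_le_sum (fun w _ => hζ.1 w) (Finset.mem_univ z)
    _ = 1 := hζ.2.1
  rw [show -(∑ z : S × A × S, |r z.1 z.2.1|) = ∑ z : S × A × S, -|r z.1 z.2.1| from by
    rw [Finset.sum_neg_distrib]]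
  apply Finset.sum_le_sum
  intro z hz
  have h2 : -|r z.1 z.2.1| * ζ z ≤ r z.1 z.2.1 * ζ z :=
    mul_le_mul_of_nonneg_right (neg_abs_le _) (hζ.1 z)
  have h3 : |r z.1 z.2.1| * ζ z ≤ |r z.1 z.2.1| * 1 :=
    mul_le_mul_of_nonneg_left (h1 z hz) (abs_nonneg _)
  nlinarith [abs_nonneg (r z.1 z.2.1), hζ.1 z]

lemma aux_bddBelow (r : S → A → ℝ) (π : S → A → ℝ) (ρ : ℝ) (ξ' : S × A × S → ℝ)
    (f : (S × A × S → ℝ) → (S × A × S → ℝ))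
    (hf : ∀ ζ0 ∈ Xi0Set S A, f ζ0 ∈ Xi0Set S A ∧ IsShift S A π ζ0 (f ζ0)) :
    BddBelow ((fun ξ0 => V S A r (f ξ0)) ''
      {ξ0 | ξ0 ∈ Xi0Set S A ∧ Dmdp S A ξ' ξ0 ≤ (ρ : EReal)}) := by
  refine ⟨-(∑ z : S × A × S, |r z.1 z.2.1|), ?_⟩
  rintro v ⟨ξ0, ⟨hξ0, _⟩, rfl⟩
  exact aux_V_lb S A r (f ξ0) ((hf ξ0 hξ0).1).1

/-- Direction (a): every feasible `ξ0` yields a feasible kernel-distribution pair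
with the same value. -/
lemma aux_a (r : S → A → ℝ) (π : S → A → ℝ) (ρ : ℝ) (ξ' : S × A × S → ℝ)
    (f : (S × A × S → ℝ) → (S × A × S → ℝ))
    (hf : ∀ ζ0 ∈ Xi0Set S A, f ζ0 ∈ Xi0Set S A ∧ IsShift S A π ζ0 (f ζ0))
    (ξ0 : S × A × S → ℝ) (hξ0 : ξ0 ∈ Xi0Set S A)
    (hD : Dmdp S A ξ' ξ0 ≤ (ρ : EReal)) (hξ' : ξ' ∈ Xi0Set S A) :
    ∃ Q : S → A → S → ℝ, ∃ μ : S × A → ℝ, Q ∈ kernelSet S A ∧ gE S A ξ' Q ≤ (ρ : EReal) ∧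
      (∀ x, 0 ≤ μ x) ∧ (∑ x, μ x = 1) ∧
      (∀ x' : S × A, μ x' = ∑ x : S × A, μ x * (π x'.1 x'.2 * Q x.1 x.2 x'.1)) ∧
      V S A r (f ξ0) = ∑ x : S × A, r x.1 x.2 * μ x := by
  have hm0 : ∀ x, 0 < muXi S A ξ0 x := aux_muXi_pos S A ξ0 hξ0
  obtain ⟨μ, hμ0, hμ1, hμst, hμshift⟩ := (hf ξ0 hξ0).2
  refine ⟨QXi S A ξ0, μ, aux_QXi_kernel S A ξ0 hξ0.1.1 hm0,
    le_trans (aux_kernel_le_Dmdp S A ξ' ξ0 hξ' hξ0.1) hD, hμ0, hμ1, hμst, ?_⟩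
  exact aux_V_shift S A r ξ0 (f ξ0) μ hm0 hμshift

/-- Direction (b): every feasible kernel-distribution pair dominates `Vrho`. -/
lemma aux_b (r : S → A → ℝ) (π : S → A → ℝ) (hπ : π ∈ policyPos S A)
    (ρ : ℝ) (ξ' : S × A × S → ℝ) (hξ' : ξ' ∈ Xi0Set S A)
    (f : (S × A × S → ℝ) → (S × A × S → ℝ))
    (hf : ∀ ζ0 ∈ Xi0Set S A, f ζ0 ∈ Xi0Set S A ∧ IsShift S A π ζ0 (f ζ0))
    (Q : S → A → S → ℝ) (hQk : Q ∈ kernelSet S A) (hg : gE S A ξ' Q ≤ (ρ : EReal))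
    (μ₂ : S × A → ℝ) (hμ0 : ∀ x, 0 ≤ μ₂ x) (hμ1 : ∑ x, μ₂ x = 1)
    (hst : ∀ x' : S × A, μ₂ x' = ∑ x : S × A, μ₂ x * (π x'.1 x'.2 * Q x.1 x.2 x'.1)) :
    Vrho S A r f ρ ξ' ≤ ∑ x : S × A, r x.1 x.2 * μ₂ x := by
  haveI hS : Nonempty S := aux_nonempty_S S A ξ' hξ'.1
  haveI hA : Nonempty A := aux_nonempty_A S A ξ' hξ'.1
  have hξ'0 : ∀ z, 0 ≤ ξ' z := hξ'.1.1
  have hmp : ∀ x, 0 < muXi S A ξ' x := aux_muXi_pos S A ξ' hξ'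
  have hrp : ∀ s, 0 < rowXi S A ξ' s := aux_rowXi_pos S A ξ' hA hξ'0 hmp
  have hπ'pos : ∀ s a, 0 < piXi S A ξ' s a := by
    intro s a; rw [aux_piXi_eq]; exact div_pos (hmp (s, a)) (hrp s)
  have hπ'sum : ∀ s, ∑ a, piXi S A ξ' s a = 1 := by
    intro s
    rw [Finset.sum_congr rfl fun a _ => aux_piXi_eq S A ξ' s a, ← Finset.sum_div,
      ← aux_rowXi_eq, div_self (ne_of_gt (hrp s))]
  have hQsupp := aux_gE_supp S A ξ' hξ' ρ Q hQk hg
  have hQ0 : ∀ s a s', 0 ≤ Q s a s' := fun s a s' => (hQk s a).1 s'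
  -- the state-level chain
  set K : S → S → ℝ := fun s s' => ∑ a, piXi S A ξ' s a * Q s a s' with hK
  have hK0 : ∀ s s', 0 ≤ K s s' := fun s s' =>
    Finset.sum_nonneg fun a _ => mul_nonneg (le_of_lt (hπ'pos s a)) (hQ0 s a s')
  have hK1 : ∀ s, ∑ s', K s s' = 1 := by
    intro s
    rw [hK]
    dsimp only
    rw [Finset.sum_comm]
    have : ∀ a, ∑ s', piXi S A ξ' s a * Q s a s' = piXi S A ξ' s a := by
      intro a
      rw [← Finset.mul_sum, (hQk s a).2, mul_one]
    rw [Finset.sum_congr rfl fun a _ => this a, hπ'sum s]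
  have hKconn : ∀ s t : S, Relation.ReflTransGen (fun u v : S => 0 < K u v) s t := by
    intro s t
    have a₀ : A := Classical.arbitrary A
    have hlift := Relation.ReflTransGen.lift (r := fun u v : S × A => 0 < ξ' (u.1, u.2, v.1))
      (p := fun u v : S => 0 < K u v) Prod.fst ?_ _ _ (hξ'.2 (s, a₀) (t, a₀))
    · exact hlift
    · intro u v h
      have hq : 0 < Q u.1 u.2 v.1 :=
        hQsupp u v.1 ((aux_QXi_pos_iff S A ξ' hξ'0 u (hmp u) v.1).2 h)
      have hterm : 0 < piXi S A ξ' u.1 u.2 * Q u.1 u.2 v.1 := mul_pos (hπ'pos u.1 u.2) hq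
      calc (0:ℝ) < piXi S A ξ' u.1 u.2 * Q u.1 u.2 v.1 := hterm
      _ ≤ K u.1 v.1 := Finset.single_le_sum
          (f := fun a => piXi S A ξ' u.1 a * Q u.1 a v.1)
          (fun a _ => mul_nonneg (le_of_lt (hπ'pos u.1 a)) (hQ0 u.1 a v.1))
          (Finset.mem_univ u.2)
  obtain ⟨h, hh0, hh1, hhst⟩ := aux_exists_stationary K hK0 hK1
  have hhpos : ∀ s, 0 < h s := by
    have hex : ∃ s, 0 < h s := by
      by_contra hcon
      push_neg at hcon
      have : ∑ s, h s = 0 := le_antisymm (Finset.sum_nonpos fun s _ => hcon s)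
        (Finset.sum_nonneg fun s _ => hh0 s)
      rw [hh1] at this; norm_num at this
    obtain ⟨s₁, hs₁⟩ := hex
    exact aux_stationary_pos K hK0 h hh0 hhst hs₁ (hKconn s₁)
  -- the lifted distribution
  set ξ0 : S × A × S → ℝ := fun z => piXi S A ξ' z.1 z.2.1 * h z.1 * Q z.1 z.2.1 z.2.2
    with hξ0def
  have hξ00 : ∀ z, 0 ≤ ξ0 z := by
    intro z
    exact mul_nonneg (mul_nonneg (le_of_lt (hπ'pos _ _)) (le_of_lt (hhpos _))) (hQ0 _ _ _)
  have hmu0 : ∀ s a, muXi S A ξ0 (s, a) = piXi S A ξ' s a * h s := by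
    intro s a
    rw [show muXi S A ξ0 (s, a) = ∑ s', piXi S A ξ' s a * h s * Q s a s' from rfl,
      ← Finset.mul_sum, (hQk s a).2, mul_one]
  have hmu0x : ∀ x : S × A, muXi S A ξ0 x = piXi S A ξ' x.1 x.2 * h x.1 := by
    intro x
    have := hmu0 x.1 x.2
    rwa [Prod.mk.eta] at this
  have hm0pos : ∀ x : S × A, 0 < muXi S A ξ0 x := by
    intro x; rw [hmu0x]; exact mul_pos (hπ'pos x.1 x.2) (hhpos x.1)
  have hrow0 : ∀ s, rowXi S A ξ0 s = h s := by
    intro s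
    rw [aux_rowXi_eq, Finset.sum_congr rfl fun a _ => hmu0 s a, ← Finset.sum_mul,
      hπ'sum s, one_mul]
  have hQXi0 : ∀ s a s', QXi S A ξ0 s a s' = Q s a s' := by
    intro s a s'
    rw [QXi, show ξ0 (s, a, s') = piXi S A ξ' s a * h s * Q s a s' from rfl, hmu0 s a,
      mul_comm (piXi S A ξ' s a * h s) (Q s a s'),
      mul_div_cancel_right₀ _ (ne_of_gt (mul_pos (hπ'pos s a) (hhpos s)))]
  have hξ0Xi : ξ0 ∈ XiSet S A := by
    refine ⟨hξ00, ?_, ?_⟩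
    · rw [aux_sum3]
      have e1 : ∀ s a, ∑ s', ξ0 (s, a, s') = piXi S A ξ' s a * h s := hmu0
      rw [Finset.sum_congr rfl fun s _ => Finset.sum_congr rfl fun a _ => e1 s a]
      have e2 : ∀ s, ∑ a, piXi S A ξ' s a * h s = h s := by
        intro s; rw [← Finset.sum_mul, hπ'sum s, one_mul]
      rw [Finset.sum_congr rfl fun s _ => e2 s, hh1]
    · intro s
      have eL : ∑ s' : S, ∑ a : A, ξ0 (s, a, s') = h s := by
        rw [Finset.sum_comm]
        rw [show (∑ a : A, ∑ s' : S, ξ0 (s, a, s')) = ∑ a : A, muXi S A ξ0 (s, a) from rfl]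
        rw [Finset.sum_congr rfl fun a (_ : a ∈ Finset.univ) => hmu0 s a]
        rw [← Finset.sum_mul, hπ'sum s, one_mul]
      have eR : ∑ s' : S, ∑ a : A, ξ0 (s', a, s) = h s := by
        have e3 : ∀ s', ∑ a, ξ0 (s', a, s) = h s' * K s' s := by
          intro s'
          rw [show (∑ a, ξ0 (s', a, s)) = ∑ a, piXi S A ξ' s' a * h s' * Q s' a s from rfl,
            hK]
          dsimp only
          rw [Finset.mul_sum]
          refine Finset.sum_congr rfl fun a _ => by ring
        rw [Finset.sum_congr rfl fun s' _ => e3 s', ← hhst s]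
      rw [eL, eR]
  have hξ0supp : ∀ z, 0 < ξ' z → 0 < ξ0 z := by
    intro z hz
    have hz' : 0 < ξ' ((z.1, z.2.1).1, (z.1, z.2.1).2, z.2.2) := by
      simpa using hz
    have hq : 0 < Q z.1 z.2.1 z.2.2 :=
      hQsupp (z.1, z.2.1) z.2.2
        ((aux_QXi_pos_iff S A ξ' hξ'0 (z.1, z.2.1) (hmp (z.1, z.2.1)) z.2.2).2 hz')
    exact mul_pos (mul_pos (hπ'pos z.1 z.2.1) (hhpos z.1)) hq
  have hξ0Xi0 : ξ0 ∈ Xi0Set S A := by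
    refine ⟨hξ0Xi, ?_⟩
    intro x y
    refine Relation.ReflTransGen.mono ?_ _ _ (hξ'.2 x y)
    intro u v hedge
    exact hξ0supp (u.1, u.2, v.1) hedge
  have hQXi0fun : QXi S A ξ0 = Q := by
    funext s a s'; exact hQXi0 s a s'
  have hDfeas : Dmdp S A ξ' ξ0 ≤ (ρ : EReal) := by
    rw [aux_Dmdp_eq_kernel S A ξ' ξ0 hξ' hξ0Xi hξ0supp
      (fun s a => by rw [hmu0 s a, hrow0 s]), hQXi0fun]
    exact hg
  -- the shifted distribution and uniqueness of the stationary distribution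
  obtain ⟨μt, hμt0, hμt1, hμtst, hμtshift⟩ := (hf ξ0 hξ0Xi0).2
  have hμtst' : ∀ x' : S × A, μt x' = ∑ x : S × A, μt x * (π x'.1 x'.2 * Q x.1 x.2 x'.1) := by
    intro x'
    rw [hμtst x']
    refine Finset.sum_congr rfl fun x _ => by rw [hQXi0fun]
  haveI : Nonempty (S × A) := ⟨(Classical.arbitrary S, Classical.arbitrary A)⟩
  have hμeq : μt = μ₂ := by
    apply aux_stationary_unique (fun x y : S × A => π y.1 y.2 * Q x.1 x.2 y.1)
      (fun x y => mul_nonneg (le_of_lt (hπ.2 y.1 y.2)) (hQ0 x.1 x.2 y.1))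
      ?_ μt μ₂ hμt0 hμt1 hμtst' hμ0 hμ1 hst
    · intro x y
      refine Relation.ReflTransGen.mono ?_ _ _
        (aux_conn_of_supp S A ξ' hξ' Q hQsupp x y)
      intro u v h'
      exact mul_pos (hπ.2 v.1 v.2) h'
  have hV : V S A r (f ξ0) = ∑ x : S × A, r x.1 x.2 * μ₂ x := by
    rw [aux_V_shift S A r ξ0 (f ξ0) μt hm0pos hμtshift, hμeq]
  rw [← hV, Vrho]
  apply csInf_le (aux_bddBelow S A r π ρ ξ' f hf)
  exact ⟨ξ0, ⟨hξ0Xi0, hDfeas⟩, rfl⟩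


lemma aux_QXi_nonneg (ξ' : S × A × S → ℝ) (h0 : ∀ z, 0 ≤ ξ' z) (x : S × A) (s' : S) :
    0 ≤ QXi S A ξ' x.1 x.2 s' :=
  div_nonneg (h0 _) (aux_muXi_nonneg S A ξ' h0 _)

/-- flattened form of `rG` -/
lemma aux_rG_flat (ξ' : S × A × S → ℝ) (Q : S → A → S → ℝ) :
    rG S A ξ' Q = ∑ w : (S × A) × S, muXi S A ξ' w.1 *
      (if QXi S A ξ' w.1.1 w.1.2 w.2 = 0 then (0:ℝ)
       else QXi S A ξ' w.1.1 w.1.2 w.2 *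
         Real.log (QXi S A ξ' w.1.1 w.1.2 w.2 / Q w.1.1 w.1.2 w.2)) := by
  rw [rG]
  rw [show (∑ w : (S × A) × S, muXi S A ξ' w.1 *
      (if QXi S A ξ' w.1.1 w.1.2 w.2 = 0 then (0:ℝ)
       else QXi S A ξ' w.1.1 w.1.2 w.2 *
         Real.log (QXi S A ξ' w.1.1 w.1.2 w.2 / Q w.1.1 w.1.2 w.2)))
      = ∑ x : S × A, ∑ s' : S, muXi S A ξ' x *
      (if QXi S A ξ' x.1 x.2 s' = 0 then (0:ℝ)
       else QXi S A ξ' x.1 x.2 s' *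
         Real.log (QXi S A ξ' x.1 x.2 s' / Q x.1 x.2 s'))
    from Fintype.sum_prod_type _]
  refine Finset.sum_congr rfl fun x _ => ?_
  rw [rKLS, Finset.mul_sum]

/-- Uniform positive lower bound on feasible kernels over the support of `ξ'`. -/
lemma aux_unif_bound (ξ' : S × A × S → ℝ) (hξ' : ξ' ∈ Xi0Set S A) (ρ : ℝ)
    (x₀ : S × A) (s₀ : S) (hp₀ : 0 < QXi S A ξ' x₀.1 x₀.2 s₀) :
    ∃ ε : ℝ, 0 < ε ∧ ∀ Q, Q ∈ kernelSet S A → gE S A ξ' Q ≤ (ρ : EReal) →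
      ε ≤ Q x₀.1 x₀.2 s₀ := by
  classical
  have hmp : ∀ x, 0 < muXi S A ξ' x := aux_muXi_pos S A ξ' hξ'
  set β : (S × A) × S → ℝ := fun w => muXi S A ξ' w.1 *
    (if QXi S A ξ' w.1.1 w.1.2 w.2 = 0 then (0:ℝ)
     else QXi S A ξ' w.1.1 w.1.2 w.2 * Real.log (QXi S A ξ' w.1.1 w.1.2 w.2)) with hβ
  set w₀ : (S × A) × S := (x₀, s₀) with hw₀
  set M : ℝ := ρ - (∑ w : (S × A) × S, β w) + β w₀ with hM
  set L : ℝ := Real.log (QXi S A ξ' x₀.1 x₀.2 s₀)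
    - M / (muXi S A ξ' x₀ * QXi S A ξ' x₀.1 x₀.2 s₀) with hL
  refine ⟨Real.exp L, Real.exp_pos L, ?_⟩
  intro Q hQk hg
  have hQs := aux_gE_supp S A ξ' hξ' ρ Q hQk hg
  have hQ1 : ∀ x : S × A, ∀ s', Q x.1 x.2 s' ≤ 1 := by
    intro x s'
    calc Q x.1 x.2 s' ≤ ∑ t, Q x.1 x.2 t :=
      Finset.single_le_sum (fun t _ => (hQk x.1 x.2).1 t) (Finset.mem_univ s')
    _ = 1 := (hQk x.1 x.2).2
  have hne : ∀ x : S × A, ∀ s', QXi S A ξ' x.1 x.2 s' ≠ 0 → Q x.1 x.2 s' ≠ 0 := by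
    intro x s' h
    have hpos : 0 < QXi S A ξ' x.1 x.2 s' :=
      lt_of_le_of_ne (aux_QXi_nonneg S A ξ' hξ'.1.1 _ _) (Ne.symm h)
    exact ne_of_gt (hQs x s' hpos)
  have hrG : rG S A ξ' Q ≤ ρ := by
    have := aux_gE_eq_coe S A ξ' Q hne ▸ hg
    exact_mod_cast this
  -- termwise lower bound β ≤ t
  set t : (S × A) × S → ℝ := fun w => muXi S A ξ' w.1 *
    (if QXi S A ξ' w.1.1 w.1.2 w.2 = 0 then (0:ℝ)
     else QXi S A ξ' w.1.1 w.1.2 w.2 *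
       Real.log (QXi S A ξ' w.1.1 w.1.2 w.2 / Q w.1.1 w.1.2 w.2)) with ht
  have hβt : ∀ w, β w ≤ t w := by
    intro w
    rw [hβ, ht]
    dsimp only
    by_cases h : QXi S A ξ' w.1.1 w.1.2 w.2 = 0
    · rw [if_pos h, if_pos h]
    · rw [if_neg h, if_neg h]
      apply mul_le_mul_of_nonneg_left _ (le_of_lt (hmp w.1))
      have hppos : 0 < QXi S A ξ' w.1.1 w.1.2 w.2 :=
        lt_of_le_of_ne (aux_QXi_nonneg S A ξ' hξ'.1.1 _ _) (Ne.symm h)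
      apply mul_le_mul_of_nonneg_left _ (le_of_lt hppos)
      rw [Real.log_div h (hne w.1 w.2 h)]
      have hlogq : Real.log (Q w.1.1 w.1.2 w.2) ≤ 0 :=
        Real.log_nonpos ((hQk w.1.1 w.1.2).1 w.2) (hQ1 w.1 w.2)
      linarith
  have htw₀ : t w₀ ≤ M := by
    have h1 : rG S A ξ' Q = t w₀ + ∑ w ∈ Finset.univ.erase w₀, t w := by
      rw [aux_rG_flat, ← Finset.add_sum_erase _ t (Finset.mem_univ w₀)]
    have h2 : ∑ w ∈ Finset.univ.erase w₀, β w ≤ ∑ w ∈ Finset.univ.erase w₀, t w :=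
      Finset.sum_le_sum fun w _ => hβt w
    have h3 : ∑ w ∈ Finset.univ.erase w₀, β w = (∑ w, β w) - β w₀ := by
      rw [Finset.sum_erase_eq_sub (Finset.mem_univ w₀)]
    rw [hM]
    have := hrG
    rw [h1] at this
    linarith [h2, h3.symm.le, h3.le]
  -- extract the bound on log Q
  have hq₀pos : 0 < Q x₀.1 x₀.2 s₀ := hQs x₀ s₀ hp₀
  have htw₀' : muXi S A ξ' x₀ * (QXi S A ξ' x₀.1 x₀.2 s₀ *
      (Real.log (QXi S A ξ' x₀.1 x₀.2 s₀) - Real.log (Q x₀.1 x₀.2 s₀))) ≤ M := by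
    have : t w₀ = muXi S A ξ' x₀ * (QXi S A ξ' x₀.1 x₀.2 s₀ *
        (Real.log (QXi S A ξ' x₀.1 x₀.2 s₀) - Real.log (Q x₀.1 x₀.2 s₀))) := by
      rw [ht]
      dsimp only
      rw [if_neg (ne_of_gt hp₀), Real.log_div (ne_of_gt hp₀) (ne_of_gt hq₀pos)]
    rw [← this]
    exact htw₀
  have hapos : 0 < muXi S A ξ' x₀ * QXi S A ξ' x₀.1 x₀.2 s₀ := mul_pos (hmp x₀) hp₀
  have hdiv : Real.log (QXi S A ξ' x₀.1 x₀.2 s₀) - Real.log (Q x₀.1 x₀.2 s₀)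
      ≤ M / (muXi S A ξ' x₀ * QXi S A ξ' x₀.1 x₀.2 s₀) := by
    rw [le_div_iff₀ hapos]
    nlinarith [htw₀']
  have hlogq : L ≤ Real.log (Q x₀.1 x₀.2 s₀) := by
    rw [hL]; linarith
  calc Real.exp L ≤ Real.exp (Real.log (Q x₀.1 x₀.2 s₀)) := Real.exp_le_exp.2 hlogq
  _ = Q x₀.1 x₀.2 s₀ := Real.exp_log hq₀pos

/-- Closedness of the feasible kernel set. -/
lemma aux_CQ_closed (ξ' : S × A × S → ℝ) (hξ' : ξ' ∈ Xi0Set S A) (ρ : ℝ) :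
    IsClosed {Q : S → A → S → ℝ | Q ∈ kernelSet S A ∧ gE S A ξ' Q ≤ (ρ : EReal)} := by
  apply IsSeqClosed.isClosed
  intro Qn Qb hmem htend
  have hcomp : ∀ s a s', Tendsto (fun n => Qn n s a s') atTop (𝓝 (Qb s a s')) := by
    intro s a s'
    have c1 : Continuous fun Q : S → A → S → ℝ => Q s := continuous_apply s
    have c2 : Continuous fun g : A → S → ℝ => g a := continuous_apply a
    have c3 : Continuous fun h : S → ℝ => h s' := continuous_apply s'
    exact ((c3.comp (c2.comp c1)).continuousAt.tendsto.comp htend)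
  have hQbk : Qb ∈ kernelSet S A := by
    intro s a
    constructor
    · intro s'
      exact ge_of_tendsto (hcomp s a s') (Filter.Eventually.of_forall fun n =>
        ((hmem n).1 s a).1 s')
    · have h1 : Tendsto (fun n => ∑ s', Qn n s a s') atTop (𝓝 (∑ s', Qb s a s')) :=
        tendsto_finset_sum _ fun s' _ => hcomp s a s'
      have h2 : (fun n => ∑ s', Qn n s a s') = fun _ => (1:ℝ) :=
        funext fun n => ((hmem n).1 s a).2
      rw [h2] at h1
      exact tendsto_nhds_unique h1 tendsto_const_nhds
  have hQbpos : ∀ x : S × A, ∀ s', QXi S A ξ' x.1 x.2 s' ≠ 0 → 0 < Qb x.1 x.2 s' := by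
    intro x s' h
    have hpos : 0 < QXi S A ξ' x.1 x.2 s' :=
      lt_of_le_of_ne (aux_QXi_nonneg S A ξ' hξ'.1.1 _ _) (Ne.symm h)
    obtain ⟨ε, hε, hbound⟩ := aux_unif_bound S A ξ' hξ' ρ x s' hpos
    have : ε ≤ Qb x.1 x.2 s' :=
      ge_of_tendsto (hcomp x.1 x.2 s') (Filter.Eventually.of_forall fun n =>
        hbound (Qn n) (hmem n).1 (hmem n).2)
    linarith
  refine ⟨hQbk, ?_⟩
  have hne : ∀ x : S × A, ∀ s', QXi S A ξ' x.1 x.2 s' ≠ 0 → Qb x.1 x.2 s' ≠ 0 :=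
    fun x s' h => ne_of_gt (hQbpos x s' h)
  rw [aux_gE_eq_coe S A ξ' Qb hne]
  have hrGlim : Tendsto (fun n => rG S A ξ' (Qn n)) atTop (𝓝 (rG S A ξ' Qb)) := by
    simp only [aux_rG_flat]
    refine tendsto_finset_sum _ (fun w _ => ?_)
    apply Tendsto.const_mul
    by_cases h : QXi S A ξ' w.1.1 w.1.2 w.2 = 0
    · simp only [if_pos h]
      exact tendsto_const_nhds
    · simp only [if_neg h]
      apply Tendsto.const_mul
      have hqbpos : 0 < Qb w.1.1 w.1.2 w.2 := hQbpos w.1 w.2 h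
      have hppos : 0 < QXi S A ξ' w.1.1 w.1.2 w.2 :=
        lt_of_le_of_ne (aux_QXi_nonneg S A ξ' hξ'.1.1 _ _) (Ne.symm h)
      have hdivlim : Tendsto (fun n => QXi S A ξ' w.1.1 w.1.2 w.2 / Qn n w.1.1 w.1.2 w.2)
          atTop (𝓝 (QXi S A ξ' w.1.1 w.1.2 w.2 / Qb w.1.1 w.1.2 w.2)) :=
        tendsto_const_nhds.div (hcomp w.1.1 w.1.2 w.2) (ne_of_gt hqbpos)
      exact (Real.continuousAt_log (ne_of_gt (div_pos hppos hqbpos))).tendsto.comp hdivlim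
  have hrGle : ∀ n, rG S A ξ' (Qn n) ≤ ρ := by
    intro n
    have hneN : ∀ x : S × A, ∀ s', QXi S A ξ' x.1 x.2 s' ≠ 0 → Qn n x.1 x.2 s' ≠ 0 := by
      intro x s' h
      have hpos : 0 < QXi S A ξ' x.1 x.2 s' :=
        lt_of_le_of_ne (aux_QXi_nonneg S A ξ' hξ'.1.1 _ _) (Ne.symm h)
      exact ne_of_gt (aux_gE_supp S A ξ' hξ' ρ (Qn n) (hmem n).1 (hmem n).2 x s' hpos)
    have := (hmem n).2
    rw [aux_gE_eq_coe S A ξ' (Qn n) hneN] at this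
    exact_mod_cast this
  have : rG S A ξ' Qb ≤ ρ := le_of_tendsto hrGlim (Filter.Eventually.of_forall hrGle)
  exact_mod_cast this

-- MDPMARKER

/-- **Reformulation of `V^π_ρ(ξ')`** (Lemma 6). For fixed `π ∈ Π₀`, `ρ ≥ 0` and
`ξ' ∈ Ξ₀`, the distributionally robust value function equals
`min_{Q ∈ 𝒬₀, Σ_x μ'(x) D(Q'(·|x)‖Q(·|x)) ≤ ρ} Σ_x r(x) μ_{π,Q}(x)`,
and the minimum is attained. -/
theorem Vrho_kernel_reformulation
    (r : S → A → ℝ)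
    (π : S → A → ℝ) (hπ : π ∈ policyPos S A)
    (ρ : ℝ) (hρ : 0 ≤ ρ)
    (ξ' : S × A × S → ℝ) (hξ' : ξ' ∈ Xi0Set S A)
    (f : (S × A × S → ℝ) → (S × A × S → ℝ))
    (hf : ∀ ζ0 ∈ Xi0Set S A, f ζ0 ∈ Xi0Set S A ∧ IsShift S A π ζ0 (f ζ0)) :
    ∃ Q ∈ kernel0 S A, InUncertaintySet S A ξ' ρ Q ∧
      ∃ μ : S × A → ℝ, IsStatDist S A π Q μ ∧
        (∑ x : S × A, r x.1 x.2 * μ x) = Vrho S A r f ρ ξ' ∧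
        ∀ Q₂ ∈ kernel0 S A, InUncertaintySet S A ξ' ρ Q₂ →
          ∀ μ₂ : S × A → ℝ, IsStatDist S A π Q₂ μ₂ →
            Vrho S A r f ρ ξ' ≤ ∑ x : S × A, r x.1 x.2 * μ₂ x := by
  classical
  haveI hS : Nonempty S := aux_nonempty_S S A ξ' hξ'.1
  haveI hA : Nonempty A := aux_nonempty_A S A ξ' hξ'.1
  have hρE : (0 : EReal) ≤ (ρ : EReal) := by exact_mod_cast hρ
  have hDself : Dmdp S A ξ' ξ' ≤ (ρ : EReal) := by
    rw [aux_Dmdp_self]; exact hρE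
  -- continuity helpers
  have cQ : ∀ s a s', Continuous (fun p : (S → A → S → ℝ) × (S × A → ℝ) => p.1 s a s') := by
    intro s a s'
    have c1 : Continuous fun Q : S → A → S → ℝ => Q s := continuous_apply s
    have c2 : Continuous fun g : A → S → ℝ => g a := continuous_apply a
    have c3 : Continuous fun h : S → ℝ => h s' := continuous_apply s'
    exact c3.comp (c2.comp (c1.comp continuous_fst))
  have cμ : ∀ x : S × A, Continuous (fun p : (S → A → S → ℝ) × (S × A → ℝ) => p.2 x) :=
    fun x => (continuous_apply x).comp continuous_snd
  -- the compact feasible set in kernel coordinates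
  set W : Set ((S → A → S → ℝ) × (S × A → ℝ)) :=
    {p | (p.1 ∈ kernelSet S A ∧ gE S A ξ' p.1 ≤ (ρ : EReal)) ∧ (∀ x, 0 ≤ p.2 x) ∧
      (∑ x, p.2 x) = 1 ∧
      ∀ x' : S × A, p.2 x' = ∑ x : S × A, p.2 x * (π x'.1 x'.2 * p.1 x.1 x.2 x'.1)} with hW
  have hWclosed : IsClosed W := by
    have e : W = (Prod.fst ⁻¹' {Q | Q ∈ kernelSet S A ∧ gE S A ξ' Q ≤ (ρ : EReal)}) ∩
        ((⋂ x : S × A, {p : (S → A → S → ℝ) × (S × A → ℝ) | 0 ≤ p.2 x}) ∩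
         ({p : (S → A → S → ℝ) × (S × A → ℝ) | (∑ x, p.2 x) = 1} ∩
          (⋂ x' : S × A, {p : (S → A → S → ℝ) × (S × A → ℝ) |
            p.2 x' = ∑ x : S × A, p.2 x * (π x'.1 x'.2 * p.1 x.1 x.2 x'.1)}))) := by
      ext p
      simp only [hW, Set.mem_setOf_eq, Set.mem_inter_iff, Set.mem_preimage, Set.mem_iInter]
    rw [e]
    refine IsClosed.inter ((aux_CQ_closed S A ξ' hξ' ρ).preimage continuous_fst) ?_
    refine IsClosed.inter (isClosed_iInter fun x => isClosed_le continuous_const (cμ x)) ?_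
    refine IsClosed.inter (isClosed_eq ?_ continuous_const) ?_
    · exact continuous_finset_sum _ fun x _ => cμ x
    · refine isClosed_iInter fun x' => isClosed_eq (cμ x') ?_
      exact continuous_finset_sum _ fun x _ =>
        (cμ x).mul (continuous_const.mul (cQ x.1 x.2 x'.1))
  have hWbounded : Bornology.IsBounded W := by
    apply Bornology.IsBounded.subset (Metric.isBounded_closedBall
      (x := ((0 : S → A → S → ℝ), (0 : S × A → ℝ))) (r := 1))
    rintro ⟨Q, μ⟩ ⟨⟨hQk, _⟩, hμ0, hμ1, _⟩
    rw [Metric.mem_closedBall]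
    have hQb : dist Q (0 : S → A → S → ℝ) ≤ 1 := by
      rw [dist_pi_le_iff (by norm_num : (0:ℝ) ≤ 1)]
      intro s
      rw [dist_pi_le_iff (by norm_num : (0:ℝ) ≤ 1)]
      intro a
      rw [dist_pi_le_iff (by norm_num : (0:ℝ) ≤ 1)]
      intro s'
      rw [Real.dist_eq]
      simp only [Pi.zero_apply, sub_zero]
      rw [abs_le]
      constructor
      · linarith [(hQk s a).1 s']
      · calc Q s a s' ≤ ∑ t, Q s a t :=
            Finset.single_le_sum (fun t _ => (hQk s a).1 t) (Finset.mem_univ s')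
        _ = 1 := (hQk s a).2
    have hμb : dist μ (0 : S × A → ℝ) ≤ 1 := by
      rw [dist_pi_le_iff (by norm_num : (0:ℝ) ≤ 1)]
      intro x
      rw [Real.dist_eq]
      simp only [Pi.zero_apply, sub_zero]
      rw [abs_le]
      constructor
      · linarith [hμ0 x]
      · calc μ x ≤ ∑ t, μ t :=
            Finset.single_le_sum (fun t _ => hμ0 t) (Finset.mem_univ x)
        _ = 1 := hμ1
    calc dist (Q, μ) ((0 : S → A → S → ℝ), (0 : S × A → ℝ))
        = max (dist Q 0) (dist μ 0) := Prod.dist_eq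
    _ ≤ 1 := max_le hQb hμb
  have hWcpt : IsCompact W := Metric.isCompact_of_isClosed_isBounded hWclosed hWbounded
  obtain ⟨Q1, μ1, hQ1k, hQ1g, hμ10, hμ11, hμ1st, _⟩ :=
    aux_a S A r π ρ ξ' f hf ξ' hξ' hDself hξ'
  have hWne : W.Nonempty := ⟨(Q1, μ1), ⟨⟨hQ1k, hQ1g⟩, hμ10, hμ11, hμ1st⟩⟩
  have hobjcont : Continuous (fun p : (S → A → S → ℝ) × (S × A → ℝ) =>
      ∑ x : S × A, r x.1 x.2 * p.2 x) :=
    continuous_finset_sum _ fun x _ => continuous_const.mul (cμ x)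
  obtain ⟨pstar, hpmem, hpmin⟩ := hWcpt.exists_isMinOn hWne hobjcont.continuousOn
  obtain ⟨⟨hQsk, hQsg⟩, hμs0, hμs1, hμsst⟩ := hpmem
  have hQssupp := aux_gE_supp S A ξ' hξ' ρ pstar.1 hQsk hQsg
  -- positivity of the minimizing stationary distribution
  have hexpos : ∃ x : S × A, 0 < pstar.2 x := by
    by_contra hcon
    push_neg at hcon
    have : ∑ x, pstar.2 x = 0 := le_antisymm (Finset.sum_nonpos fun x _ => hcon x)
      (Finset.sum_nonneg fun x _ => hμs0 x)
    rw [hμs1] at this; norm_num at this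
  obtain ⟨x₁, hx₁⟩ := hexpos
  have hμspos : ∀ x, 0 < pstar.2 x := by
    apply aux_stationary_pos (fun x y : S × A => π y.1 y.2 * pstar.1 x.1 x.2 y.1)
      (fun x y => mul_nonneg (le_of_lt (hπ.2 y.1 y.2)) ((hQsk x.1 x.2).1 y.1))
      pstar.2 hμs0 hμsst hx₁
    intro y
    refine Relation.ReflTransGen.mono ?_ _ _
      (aux_conn_of_supp S A ξ' hξ' pstar.1 hQssupp x₁ y)
    intro u v h'
    exact mul_pos (hπ.2 v.1 v.2) h'
  have hle : Vrho S A r f ρ ξ' ≤ ∑ x : S × A, r x.1 x.2 * pstar.2 x :=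
    aux_b S A r π hπ ρ ξ' hξ' f hf pstar.1 hQsk hQsg pstar.2 hμs0 hμs1 hμsst
  have hge : ∑ x : S × A, r x.1 x.2 * pstar.2 x ≤ Vrho S A r f ρ ξ' := by
    rw [Vrho]
    apply le_csInf
    · exact ⟨V S A r (f ξ'), ξ', ⟨hξ', hDself⟩, rfl⟩
    · rintro b ⟨ξ0, ⟨hξ0, hD0⟩, rfl⟩
      obtain ⟨Q, μ, hQk, hQg, hμ0, hμ1, hμst, hVeq⟩ :=
        aux_a S A r π ρ ξ' f hf ξ0 hξ0 hD0 hξ'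
      have hmem : (Q, μ) ∈ W := ⟨⟨hQk, hQg⟩, hμ0, hμ1, hμst⟩
      have hmin := isMinOn_iff.mp hpmin (Q, μ) hmem
      show (∑ x : S × A, r x.1 x.2 * pstar.2 x) ≤ V S A r (f ξ0)
      rw [hVeq]
      exact hmin
  refine ⟨pstar.1, ⟨hQsk, aux_conn_of_supp S A ξ' hξ' pstar.1 hQssupp⟩, hQsg, pstar.2,
    ⟨hμspos, hμs1, hμsst⟩, le_antisymm hge hle, ?_⟩
  intro Q₂ hQ₂ hunc₂ μ₂ hstat₂
  exact aux_b S A r π hπ ρ ξ' hξ' f hf Q₂ hQ₂.1 hunc₂ μ₂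
    (fun x => le_of_lt (hstat₂.1 x)) hstat₂.2.1 hstat₂.2.2


end OfflineRL
end
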